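/- arXiv:2006.14581 — 6 statements merged into one kernel-verified Lean document; each statement's English description precedes it below -/
import Mathlib

section
/- Existence of an ω-spline vanishing at the partition points with large uniform norm: Let ω be a concave modulus of continuity and let a = t₀ < t₁ < … < t_n = b be a partition of [a,b]. Then there exists a function f ∈ W^1H^ω([a,b],ℝ) such that f(t_i) = 0 for all i = 0, 1, …, n and max_{t∈[a,b]} |f(t)| ≥ (1/4)·∫_0^{(b−a)/n} ω(u) du. -/
open MeasureTheory Set

open intervalIntegral

namespace OmegaSplineAux

variable {ω : ℝ → ℝ}

/-- modulus clamped to nonnegative arguments -/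
noncomputable def wc (ω : ℝ → ℝ) : ℝ → ℝ := fun s => ω (max s 0)

section Basic

variable (hω0 : ω 0 = 0) (hcont : ContinuousOn ω (Set.Ici 0))
  (hmono : MonotoneOn ω (Set.Ici 0))
  (hsub : ∀ s t : ℝ, 0 ≤ s → 0 ≤ t → ω (s + t) ≤ ω s + ω t)

theorem wc_eq {s : ℝ} (hs : 0 ≤ s) : wc ω s = ω s := by
  simp [wc, max_eq_left hs]

theorem wc_zero : wc ω 0 = ω 0 := by simp [wc]

include hmono in
theorem wc_mono : Monotone (wc ω) := by
  intro s t hst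
  exact hmono (Set.mem_Ici.2 (le_max_right _ _)) (Set.mem_Ici.2 (le_max_right _ _)) (max_le_max hst le_rfl)

include hω0 hmono in
theorem wc_nonneg (s : ℝ) : 0 ≤ wc ω s := by
  have h0 : (0:ℝ) ∈ Set.Ici (0:ℝ) := Set.mem_Ici.2 (le_refl 0)
  have := hmono h0 (le_max_right s 0) (le_max_right s 0)
  rw [hω0] at this
  exact this

include hmono hsub in
theorem wc_sub (s t : ℝ) : wc ω (s + t) ≤ wc ω s + wc ω t := by
  have h1 : max (s + t) 0 ≤ max s 0 + max t 0 := by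
    rcases le_total (s+t) 0 with h | h
    · rw [max_eq_right h]
      have := le_max_right s 0
      have := le_max_right t 0
      positivity
    · rw [max_eq_left h]
      exact add_le_add (le_max_left _ _) (le_max_left _ _)
  calc ω (max (s+t) 0) ≤ ω (max s 0 + max t 0) :=
        hmono (Set.mem_Ici.2 (le_max_right _ _)) (Set.mem_Ici.2 (add_nonneg (le_max_right s 0) (le_max_right t 0))) h1
    _ ≤ ω (max s 0) + ω (max t 0) := hsub _ _ (le_max_right _ _) (le_max_right _ _)

omit hω0 in
include hmono hsub in
theorem wc_diff (p q : ℝ) : |wc ω p - wc ω q| ≤ wc ω |p - q| := by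
  have key : ∀ u v : ℝ, v ≤ u → wc ω u - wc ω v ≤ wc ω (u - v) := by
    intro u v huv
    have := wc_sub hmono hsub v (u - v)
    rw [add_sub_cancel] at this
    linarith
  rcases le_total q p with h | h
  · have hm := wc_mono (ω := ω) hmono h
    rw [abs_of_nonneg (by linarith : (0:ℝ) ≤ wc ω p - wc ω q),
      abs_of_nonneg (by linarith : (0:ℝ) ≤ p - q)]
    exact key p q h
  · have hm := wc_mono (ω := ω) hmono h
    rw [abs_of_nonpos (by linarith : wc ω p - wc ω q ≤ 0),
      abs_of_nonpos (by linarith : p - q ≤ 0)]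
    have := key q p h
    rw [neg_sub, neg_sub]
    linarith

include hcont in
theorem wc_cont : Continuous (wc ω) := by
  have : Continuous (fun s : ℝ => max s 0) := continuous_id.max continuous_const
  exact hcont.comp_continuous this (fun x => Set.mem_Ici.2 (le_max_right _ _))

include hω0 hcont in
theorem wc_small : ∀ ε > (0:ℝ), ∃ δ > (0:ℝ), ∀ s : ℝ, |s| < δ → wc ω s < ε := by
  intro ε hε
  have hc : ContinuousAt (wc ω) 0 := (wc_cont hcont).continuousAt
  have h0 : wc ω 0 = 0 := by rw [wc_zero, hω0]
  rw [Metric.continuousAt_iff] at hc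
  obtain ⟨δ, hδ, h⟩ := hc ε hε
  refine ⟨δ, hδ, fun s hs => ?_⟩
  have := h (by simpa [Real.dist_eq] using hs)
  rw [Real.dist_eq, h0, sub_zero] at this
  exact (le_abs_self _).trans_lt this

end Basic

/-- The basic hump profile with zeros at `p` and `q`. -/
noncomputable def bump (ω : ℝ → ℝ) (p q : ℝ) : ℝ → ℝ :=
  fun x => (1/2) * wc ω (2 * min (x - p) (q - x))

section Bump

variable (hω0 : ω 0 = 0) (hcont : ContinuousOn ω (Set.Ici 0))
  (hmono : MonotoneOn ω (Set.Ici 0))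
  (hsub : ∀ s t : ℝ, 0 ≤ s → 0 ≤ t → ω (s + t) ≤ ω s + ω t)

include hcont in
theorem bump_cont (p q : ℝ) : Continuous (bump ω p q) := by
  apply continuous_const.mul
  exact (wc_cont hcont).comp (by fun_prop)

include hcont in
theorem bump_intg (p q c d : ℝ) : IntervalIntegrable (bump ω p q) volume c d :=
  (bump_cont hcont p q).intervalIntegrable c d

include hω0 hmono in
theorem bump_nonneg (p q x : ℝ) : 0 ≤ bump ω p q x :=
  mul_nonneg (by norm_num) (wc_nonneg hω0 hmono _)

include hmono in
theorem bump_le (p q x : ℝ) : bump ω p q x ≤ (1/2) * wc ω (q - p) := by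
  have h1 : 2 * min (x - p) (q - x) ≤ q - p := by
    rcases le_total (x-p) (q-x) with h | h
    · rw [min_eq_left h]; linarith
    · rw [min_eq_right h]; linarith
  exact mul_le_mul_of_nonneg_left (wc_mono hmono h1) (by norm_num)

include hmono in
theorem bump_anti_p {p p' : ℝ} (q x : ℝ) (hp : p' ≤ p) :
    bump ω p q x ≤ bump ω p' q x := by
  refine mul_le_mul_of_nonneg_left (wc_mono hmono ?_) (by norm_num)
  have : min (x - p) (q - x) ≤ min (x - p') (q - x) :=
    min_le_min (by linarith) le_rfl
  linarith

include hmono in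
theorem bump_mono_q {q q' : ℝ} (p x : ℝ) (hq : q ≤ q') :
    bump ω p q x ≤ bump ω p q' x := by
  refine mul_le_mul_of_nonneg_left (wc_mono hmono ?_) (by norm_num)
  have : min (x - p) (q - x) ≤ min (x - p) (q' - x) :=
    min_le_min le_rfl (by linarith)
  linarith

include hmono hsub in
theorem bump_diff_q (p q q' x : ℝ) :
    |bump ω p q' x - bump ω p q x| ≤ (1/2) * wc ω (2 * |q' - q|) := by
  unfold bump
  rw [← mul_sub, abs_mul, abs_of_nonneg (by norm_num : (0:ℝ) ≤ (1/2:ℝ))]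
  refine mul_le_mul_of_nonneg_left ?_ (by norm_num)
  refine (wc_diff hmono hsub _ _).trans (wc_mono hmono ?_)
  have h1 : |min (x - p) (q' - x) - min (x - p) (q - x)| ≤ |q' - q| := by
    rcases le_total (x-p) (q'-x) with h | h <;> rcases le_total (x-p) (q-x) with h2 | h2 <;>
      simp only [min_eq_left, min_eq_right, h, h2] <;>
      [skip; skip; skip; skip] <;>
      · rw [abs_le]; constructor <;> cases abs_cases (q' - q) <;> linarith
  calc |2 * min (x - p) (q' - x) - 2 * min (x - p) (q - x)|
      = 2 * |min (x - p) (q' - x) - min (x - p) (q - x)| := by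
        rw [← mul_sub, abs_mul]; norm_num
    _ ≤ 2 * |q' - q| := by linarith

include hmono hsub in
theorem bump_diff_p (p p' q x : ℝ) :
    |bump ω p' q x - bump ω p q x| ≤ (1/2) * wc ω (2 * |p' - p|) := by
  unfold bump
  rw [← mul_sub, abs_mul, abs_of_nonneg (by norm_num : (0:ℝ) ≤ (1/2:ℝ))]
  refine mul_le_mul_of_nonneg_left ?_ (by norm_num)
  refine (wc_diff hmono hsub _ _).trans (wc_mono hmono ?_)
  have h1 : |min (x - p') (q - x) - min (x - p) (q - x)| ≤ |p' - p| := by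
    rcases le_total (x-p') (q-x) with h | h <;> rcases le_total (x-p) (q-x) with h2 | h2 <;>
      simp only [min_eq_left, min_eq_right, h, h2] <;>
      · rw [abs_le]; constructor <;> cases abs_cases (p' - p) <;> linarith
  calc |2 * min (x - p') (q - x) - 2 * min (x - p) (q - x)|
      = 2 * |min (x - p') (q - x) - min (x - p) (q - x)| := by
        rw [← mul_sub, abs_mul]; norm_num
    _ ≤ 2 * |p' - p| := by linarith

end Bump

section Integrals

variable (hω0 : ω 0 = 0) (hcont : ContinuousOn ω (Set.Ici 0))
  (hmono : MonotoneOn ω (Set.Ici 0))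
  (hsub : ∀ s t : ℝ, 0 ≤ s → 0 ≤ t → ω (s + t) ≤ ω s + ω t)

include hω0 hmono in
theorem wcint_mono (hcont : ContinuousOn ω (Set.Ici 0)) {w w' : ℝ} (hw : 0 ≤ w) (hww' : w ≤ w') :
    (∫ u in (0:ℝ)..w, wc ω u) ≤ ∫ u in (0:ℝ)..w', wc ω u := by
  have h1 : IntervalIntegrable (wc ω) volume 0 w := ((wc_cont hcont).intervalIntegrable _ _)
  have h2 : IntervalIntegrable (wc ω) volume w w' := ((wc_cont hcont).intervalIntegrable _ _)
  have h3 : (0:ℝ) ≤ ∫ u in w..w', wc ω u :=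
    intervalIntegral.integral_nonneg hww' (fun u _ => wc_nonneg hω0 hmono u)
  have := intervalIntegral.integral_add_adjacent_intervals h1 h2
  linarith

omit hω0 hcont in
theorem integ_scale {c q : ℝ} (hcq : c ≤ q) :
    (∫ x in c..q, (1/2) * wc ω (2 * (q - x))) = (1/4) * ∫ u in (0:ℝ)..(2*(q-c)), wc ω u := by
  have h1 : (∫ x in c..q, (1/2) * wc ω (2 * (q - x)))
      = ∫ x in (q - q)..(q - c), (1/2) * wc ω (2 * x) :=
    intervalIntegral.integral_comp_sub_left (fun x => (1/2) * wc ω (2 * x)) q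
  rw [h1, sub_self]
  rw [intervalIntegral.integral_const_mul]
  have h2 : (∫ x in (0:ℝ)..(q-c), wc ω (2 * x))
      = (2:ℝ)⁻¹ • ∫ x in (2*(0:ℝ))..(2*(q-c)), wc ω x :=
    intervalIntegral.integral_comp_mul_left (wc ω) two_ne_zero
  rw [h2]
  simp only [mul_zero, smul_eq_mul]
  ring

include hcont in
theorem integ_bump_total {p q : ℝ} (hpq : p ≤ q) :
    (∫ x in p..q, bump ω p q x) = (1/2) * ∫ u in (0:ℝ)..(q-p), wc ω u := by
  set w := q - p with hw
  have hw0 : 0 ≤ w := by simp [hw]; linarith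
  have h1 : (∫ x in p..q, bump ω p q x)
      = ∫ y in (p - p)..(q - p), (1/2) * wc ω (2 * min y (w - y)) := by
    rw [← intervalIntegral.integral_comp_sub_right (fun y => (1/2) * wc ω (2 * min y (w - y))) p]
    apply intervalIntegral.integral_congr
    intro x _
    simp only [bump]
    congr 2
    rw [hw]; ring_nf
  rw [h1, sub_self, ← hw]
  
  have hGc : Continuous (fun y : ℝ => (1/2) * wc ω (2 * min y (w - y))) := by
    apply continuous_const.mul
    exact (wc_cont hcont).comp (by fun_prop)
  have hadd := intervalIntegral.integral_add_adjacent_intervals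
    ((hGc.intervalIntegrable 0 (w/2)) : IntervalIntegrable _ volume 0 (w/2)) ((hGc.intervalIntegrable (w/2) w) : IntervalIntegrable _ volume (w/2) w)
  have e1 : (∫ y in (0:ℝ)..(w/2), (1/2) * wc ω (2 * min y (w - y)))
      = ∫ y in (0:ℝ)..(w/2), (1/2) * wc ω (2 * y) := by
    apply intervalIntegral.integral_congr
    intro y hy
    rw [Set.uIcc_of_le (by linarith : (0:ℝ) ≤ w/2)] at hy
    obtain ⟨hy1, hy2⟩ := hy
    show 1 / 2 * wc ω (2 * min y (w - y)) = 1 / 2 * wc ω (2 * y)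
    rw [min_eq_left (by linarith)]
  have e2 : (∫ y in (w/2)..w, (1/2) * wc ω (2 * min y (w - y)))
      = ∫ y in (w/2)..w, (1/2) * wc ω (2 * (w - y)) := by
    apply intervalIntegral.integral_congr
    intro y hy
    rw [Set.uIcc_of_le (by linarith : w/2 ≤ w)] at hy
    obtain ⟨hy1, hy2⟩ := hy
    show 1 / 2 * wc ω (2 * min y (w - y)) = 1 / 2 * wc ω (2 * (w - y))
    rw [min_eq_right (by linarith)]
  have v1 : (∫ y in (0:ℝ)..(w/2), (1/2) * wc ω (2 * y))
      = (1/4) * ∫ u in (0:ℝ)..w, wc ω u := by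
    rw [intervalIntegral.integral_const_mul]
    have h2 : (∫ x in (0:ℝ)..(w/2), wc ω (2 * x))
        = (2:ℝ)⁻¹ • ∫ x in (2*(0:ℝ))..(2*(w/2)), wc ω x :=
      intervalIntegral.integral_comp_mul_left (wc ω) two_ne_zero
    rw [h2]
    simp only [mul_zero, smul_eq_mul]
    rw [(by ring : 2 * (w/2) = w)]
    ring
  have v2 : (∫ y in (w/2)..w, (1/2) * wc ω (2 * (w - y)))
      = (1/4) * ∫ u in (0:ℝ)..w, wc ω u := by
    have := integ_scale (ω := ω) (by linarith : w/2 ≤ w)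
    rw [this, (by ring : 2 * (w - w/2) = w)]
  rw [← hadd, e1, e2, v1, v2]
  ring

include hcont in
theorem integ_right_tail {p c q : ℝ} (hcq : c ≤ q)
    (hside : ∀ x ∈ Set.Icc c q, q - x ≤ x - p) :
    (∫ x in c..q, bump ω p q x) = (1/4) * ∫ u in (0:ℝ)..(2*(q-c)), wc ω u := by
  have h1 : (∫ x in c..q, bump ω p q x) = ∫ x in c..q, (1/2) * wc ω (2 * (q - x)) := by
    apply intervalIntegral.integral_congr
    intro x hx
    rw [Set.uIcc_of_le hcq] at hx
    simp only [bump]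
    rw [min_eq_right (hside x hx)]
  rw [h1, integ_scale hcq]

theorem integ_left_tail {v e r : ℝ} (hve : v ≤ e)
    (hside : ∀ x ∈ Set.Icc v e, x - v ≤ r - x) :
    (∫ x in v..e, bump ω v r x) = (1/4) * ∫ u in (0:ℝ)..(2*(e-v)), wc ω u := by
  have h1 : (∫ x in v..e, bump ω v r x) = ∫ x in v..e, (1/2) * wc ω (2 * (x - v)) := by
    apply intervalIntegral.integral_congr
    intro x hx
    rw [Set.uIcc_of_le hve] at hx
    simp only [bump]
    rw [min_eq_left (hside x hx)]
  have h2 : (∫ x in v..e, (1/2) * wc ω (2 * (x - v)))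
      = ∫ y in (v - v)..(e - v), (1/2) * wc ω (2 * y) := by
    rw [← intervalIntegral.integral_comp_sub_right (fun y => (1/2) * wc ω (2 * y)) v]
  rw [h1, h2, sub_self]
  rw [intervalIntegral.integral_const_mul]
  have h3 : (∫ x in (0:ℝ)..(e-v), wc ω (2 * x))
      = (2:ℝ)⁻¹ • ∫ x in (2*(0:ℝ))..(2*(e-v)), wc ω x :=
    intervalIntegral.integral_comp_mul_left (wc ω) two_ne_zero
  rw [h3]
  simp only [mul_zero, smul_eq_mul]
  ring

end Integrals

/-- left partial area -/
noncomputable def AInt (ω : ℝ → ℝ) (p c v : ℝ) : ℝ := ∫ x in c..v, bump ω p v x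
/-- right partial area -/
noncomputable def BInt (ω : ℝ → ℝ) (v e r : ℝ) : ℝ := ∫ x in v..e, bump ω v r x

section AB

variable (hω0 : ω 0 = 0) (hcont : ContinuousOn ω (Set.Ici 0))
  (hmono : MonotoneOn ω (Set.Ici 0))
  (hsub : ∀ s t : ℝ, 0 ≤ s → 0 ≤ t → ω (s + t) ≤ ω s + ω t)

include hω0 hmono in
theorem AInt_nonneg {c v : ℝ} (p : ℝ) (hcv : c ≤ v) : 0 ≤ AInt ω p c v :=
  intervalIntegral.integral_nonneg hcv (fun x _ => bump_nonneg hω0 hmono _ _ _)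

include hω0 hmono in
theorem BInt_nonneg {v e : ℝ} (r : ℝ) (hve : v ≤ e) : 0 ≤ BInt ω v e r :=
  intervalIntegral.integral_nonneg hve (fun x _ => bump_nonneg hω0 hmono _ _ _)

include hcont hmono in
theorem AInt_anti_p {p p' c v : ℝ} (hp : p' ≤ p) (hcv : c ≤ v) :
    AInt ω p c v ≤ AInt ω p' c v :=
  intervalIntegral.integral_mono_on hcv (bump_intg hcont _ _ _ _) (bump_intg hcont _ _ _ _)
    (fun x _ => bump_anti_p hmono _ _ hp)

include hcont hmono in
theorem BInt_mono_r {v e r r' : ℝ} (hr : r ≤ r') (hve : v ≤ e) :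
    BInt ω v e r ≤ BInt ω v e r' :=
  intervalIntegral.integral_mono_on hve (bump_intg hcont _ _ _ _) (bump_intg hcont _ _ _ _)
    (fun x _ => bump_mono_q hmono _ _ hr)

include hω0 hcont hmono hsub in
theorem AInt_diff {p c v v' : ℝ} (hv : c ≤ v) (hvv' : v ≤ v') :
    |AInt ω p c v' - AInt ω p c v|
      ≤ (1/2) * wc ω (2 * (v' - v)) * (v - c) + (1/2) * wc ω (v' - p) * (v' - v) := by
  have i1 : IntervalIntegrable (bump ω p v') volume c v := bump_intg hcont _ _ _ _
  have i2 : IntervalIntegrable (bump ω p v) volume c v := bump_intg hcont _ _ _ _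
  have i3 : IntervalIntegrable (bump ω p v') volume v v' := bump_intg hcont _ _ _ _
  have hsplit : AInt ω p c v' = (∫ x in c..v, bump ω p v' x) + ∫ x in v..v', bump ω p v' x :=
    (intervalIntegral.integral_add_adjacent_intervals i1 i3).symm
  have hdiff : AInt ω p c v' - AInt ω p c v
      = (∫ x in c..v, (bump ω p v' x - bump ω p v x)) + ∫ x in v..v', bump ω p v' x := by
    rw [hsplit, intervalIntegral.integral_sub i1 i2]; unfold AInt; ring
  rw [hdiff]
  have b1 : |∫ x in c..v, (bump ω p v' x - bump ω p v x)|
      ≤ (1/2) * wc ω (2 * (v' - v)) * (v - c) := by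
    have := intervalIntegral.norm_integral_le_of_norm_le_const
      (C := (1/2) * wc ω (2 * (v' - v))) (f := fun x => bump ω p v' x - bump ω p v x)
      (a := c) (b := v) ?_
    · rw [Real.norm_eq_abs] at this
      calc |∫ x in c..v, (bump ω p v' x - bump ω p v x)|
          ≤ (1/2) * wc ω (2 * (v' - v)) * |v - c| := this
        _ = (1/2) * wc ω (2 * (v' - v)) * (v - c) := by rw [abs_of_nonneg (by linarith)]
    · intro x _
      rw [Real.norm_eq_abs]
      have := bump_diff_q hmono hsub p v v' x
      rwa [abs_of_nonneg (by linarith : (0:ℝ) ≤ v' - v)] at this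
  have b2 : |∫ x in v..v', bump ω p v' x| ≤ (1/2) * wc ω (v' - p) * (v' - v) := by
    have := intervalIntegral.norm_integral_le_of_norm_le_const
      (C := (1/2) * wc ω (v' - p)) (f := fun x => bump ω p v' x) (a := v) (b := v') ?_
    · rw [Real.norm_eq_abs] at this
      calc |∫ x in v..v', bump ω p v' x| ≤ (1/2) * wc ω (v' - p) * |v' - v| := this
        _ = (1/2) * wc ω (v' - p) * (v' - v) := by rw [abs_of_nonneg (by linarith)]
    · intro x _
      rw [Real.norm_eq_abs, abs_of_nonneg (bump_nonneg hω0 hmono _ _ _)]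
      exact bump_le hmono _ _ _
  calc |(∫ x in c..v, (bump ω p v' x - bump ω p v x)) + ∫ x in v..v', bump ω p v' x|
      ≤ |∫ x in c..v, (bump ω p v' x - bump ω p v x)| + |∫ x in v..v', bump ω p v' x| :=
        abs_add_le _ _
    _ ≤ _ := add_le_add b1 b2

include hω0 hcont hmono hsub in
theorem BInt_diff {v v' e r : ℝ} (hv' : v' ≤ e) (hvv' : v ≤ v') :
    |BInt ω v' e r - BInt ω v e r|
      ≤ (1/2) * wc ω (2 * (v' - v)) * (e - v') + (1/2) * wc ω (r - v) * (v' - v) := by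
  have i1 : IntervalIntegrable (bump ω v r) volume v v' := bump_intg hcont _ _ _ _
  have i2 : IntervalIntegrable (bump ω v r) volume v' e := bump_intg hcont _ _ _ _
  have i3 : IntervalIntegrable (bump ω v' r) volume v' e := bump_intg hcont _ _ _ _
  have hsplit : BInt ω v e r = (∫ x in v..v', bump ω v r x) + ∫ x in v'..e, bump ω v r x :=
    (intervalIntegral.integral_add_adjacent_intervals i1 i2).symm
  have hdiff : BInt ω v' e r - BInt ω v e r
      = (∫ x in v'..e, (bump ω v' r x - bump ω v r x)) - ∫ x in v..v', bump ω v r x := by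
    rw [hsplit, intervalIntegral.integral_sub i3 i2]; unfold BInt; ring
  rw [hdiff]
  have b1 : |∫ x in v'..e, (bump ω v' r x - bump ω v r x)|
      ≤ (1/2) * wc ω (2 * (v' - v)) * (e - v') := by
    have := intervalIntegral.norm_integral_le_of_norm_le_const
      (C := (1/2) * wc ω (2 * (v' - v))) (f := fun x => bump ω v' r x - bump ω v r x)
      (a := v') (b := e) ?_
    · rw [Real.norm_eq_abs] at this
      calc |∫ x in v'..e, (bump ω v' r x - bump ω v r x)|
          ≤ (1/2) * wc ω (2 * (v' - v)) * |e - v'| := this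
        _ = (1/2) * wc ω (2 * (v' - v)) * (e - v') := by rw [abs_of_nonneg (by linarith)]
    · intro x _
      rw [Real.norm_eq_abs]
      have := bump_diff_p hmono hsub v v' r x
      rwa [abs_of_nonneg (by linarith : (0:ℝ) ≤ v' - v)] at this
  have b2 : |∫ x in v..v', bump ω v r x| ≤ (1/2) * wc ω (r - v) * (v' - v) := by
    have := intervalIntegral.norm_integral_le_of_norm_le_const
      (C := (1/2) * wc ω (r - v)) (f := fun x => bump ω v r x) (a := v) (b := v') ?_
    · rw [Real.norm_eq_abs] at this
      calc |∫ x in v..v', bump ω v r x| ≤ (1/2) * wc ω (r - v) * |v' - v| := this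
        _ = (1/2) * wc ω (r - v) * (v' - v) := by rw [abs_of_nonneg (by linarith)]
    · intro x _
      rw [Real.norm_eq_abs, abs_of_nonneg (bump_nonneg hω0 hmono _ _ _)]
      exact bump_le hmono _ _ _
  calc |(∫ x in v'..e, (bump ω v' r x - bump ω v r x)) - ∫ x in v..v', bump ω v r x|
      ≤ |∫ x in v'..e, (bump ω v' r x - bump ω v r x)| + |∫ x in v..v', bump ω v r x| :=
        abs_sub _ _
    _ ≤ _ := add_le_add b1 b2

set_option maxHeartbeats 800000 in
include hω0 hcont hmono hsub in
theorem phi_contOn {p c e r : ℝ} (hp : p ≤ c) (hce : c ≤ e) (her : e ≤ r) :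
    ContinuousOn (fun v => AInt ω p c v - BInt ω v e r) (Set.Icc c e) := by
  intro v₀ hv₀
  rw [Metric.continuousWithinAt_iff]
  intro ε hε
  set M : ℝ := (e - c) + 1 with hM
  have hM0 : 0 < M := by simp only [hM]; linarith
  set K : ℝ := (1/2) * wc ω (e - p) + (1/2) * wc ω (r - c) + 1 with hK
  have hK0 : 0 < K := by
    have := wc_nonneg hω0 hmono (e - p)
    have := wc_nonneg hω0 hmono (r - c)
    simp only [hK]; linarith
  obtain ⟨δ₀, hδ₀, hsmall⟩ := wc_small hω0 hcont (ε/(2*M)) (by positivity)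
  refine ⟨min (δ₀/2) (ε/(2*K)), by positivity, ?_⟩
  intro v hv hdist
  rw [Real.dist_eq] at hdist
  rw [Real.dist_eq]
  set u := min v v₀ with hu
  set w := max v v₀ with hw
  have huI : u ∈ Set.Icc c e := ⟨le_min hv.1 hv₀.1, (min_le_left _ _).trans hv.2⟩
  have hwI : w ∈ Set.Icc c e := ⟨hv.1.trans (le_max_left _ _), max_le hv.2 hv₀.2⟩
  have huw : u ≤ w := min_le_max
  have hwu : w - u = |v - v₀| := by
    rcases le_total v v₀ with h | h
    · rw [hu, hw, min_eq_left h, max_eq_right h, abs_of_nonpos (by linarith)]; ring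
    · rw [hu, hw, min_eq_right h, max_eq_left h, abs_of_nonneg (by linarith)]
  have hwuδ : w - u < min (δ₀/2) (ε/(2*K)) := by rw [hwu]; exact hdist
  have goal_eq : |(fun v => AInt ω p c v - BInt ω v e r) v
      - (fun v => AInt ω p c v - BInt ω v e r) v₀|
      = |(AInt ω p c w - BInt ω w e r) - (AInt ω p c u - BInt ω u e r)| := by
    rcases le_total v v₀ with h | h
    · rw [hu, hw, min_eq_left h, max_eq_right h]
      simp only [abs_sub_comm]
    · rw [hu, hw, min_eq_right h, max_eq_left h]
  rw [goal_eq]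
  have hA := AInt_diff hω0 hcont hmono hsub (p := p) huI.1 huw
  have hB := BInt_diff hω0 hcont hmono hsub (v := u) (v' := w) (e := e) (r := r) hwI.2 huw
  -- bound each term
  have m1 : wc ω (2 * (w - u)) < ε/(2*M) := by
    apply hsmall
    rw [abs_of_nonneg (by linarith)]
    have := hwuδ.trans_le (min_le_left _ _)
    linarith
  have m1' : 0 ≤ wc ω (2 * (w - u)) := wc_nonneg hω0 hmono _
  have m2 : wc ω (w - p) ≤ wc ω (e - p) := wc_mono hmono (by linarith [hwI.2])
  have m3 : wc ω (r - u) ≤ wc ω (r - c) := wc_mono hmono (by linarith [huI.1])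
  have hwue : w - u < ε/(2*K) := hwuδ.trans_le (min_le_right _ _)
  have hwu0 : 0 ≤ w - u := by linarith
  have bA : |AInt ω p c w - AInt ω p c u|
      ≤ (1/2) * (ε/(2*M)) * M + (1/2) * wc ω (e - p) * (w - u) := by
    refine hA.trans (add_le_add ?_ ?_)
    · have h1 : u - c ≤ M := by simp only [hM]; linarith [huI.2]
      have h2 : (0:ℝ) ≤ u - c := by linarith [huI.1]
      calc (1/2) * wc ω (2 * (w-u)) * (u - c) ≤ (1/2) * wc ω (2*(w-u)) * M :=
            mul_le_mul_of_nonneg_left h1 (by positivity)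
        _ ≤ (1/2) * (ε/(2*M)) * M :=
            mul_le_mul_of_nonneg_right
              (mul_le_mul_of_nonneg_left m1.le (by norm_num)) hM0.le
    · exact mul_le_mul_of_nonneg_right (mul_le_mul_of_nonneg_left m2 (by norm_num)) hwu0
  have bB : |BInt ω w e r - BInt ω u e r|
      ≤ (1/2) * (ε/(2*M)) * M + (1/2) * wc ω (r - c) * (w - u) := by
    refine hB.trans (add_le_add ?_ ?_)
    · have h1 : e - w ≤ M := by simp only [hM]; linarith [hwI.1]
      have h2 : (0:ℝ) ≤ e - w := by linarith [hwI.2]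
      calc (1/2) * wc ω (2 * (w-u)) * (e - w) ≤ (1/2) * wc ω (2*(w-u)) * M :=
            mul_le_mul_of_nonneg_left h1 (by positivity)
        _ ≤ (1/2) * (ε/(2*M)) * M :=
            mul_le_mul_of_nonneg_right
              (mul_le_mul_of_nonneg_left m1.le (by norm_num)) hM0.le
    · exact mul_le_mul_of_nonneg_right (mul_le_mul_of_nonneg_left m3 (by norm_num)) hwu0
  have key : |(AInt ω p c w - BInt ω w e r) - (AInt ω p c u - BInt ω u e r)|
      ≤ |AInt ω p c w - AInt ω p c u| + |BInt ω w e r - BInt ω u e r| := by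
    have : (AInt ω p c w - BInt ω w e r) - (AInt ω p c u - BInt ω u e r)
        = (AInt ω p c w - AInt ω p c u) - (BInt ω w e r - BInt ω u e r) := by ring
    rw [this]
    exact abs_sub _ _
  have hMM : (1/2) * (ε/(2*M)) * M = ε/4 := by field_simp; ring
  have hKsum : (1/2) * wc ω (e - p) * (w - u) + (1/2) * wc ω (r - c) * (w - u) ≤ K * (w - u) := by
    have h5 : ((1/2) * wc ω (e - p) + (1/2) * wc ω (r - c)) ≤ K := by simp only [hK]; linarith
    calc (1/2) * wc ω (e - p) * (w - u) + (1/2) * wc ω (r - c) * (w - u)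
        = ((1/2) * wc ω (e - p) + (1/2) * wc ω (r - c)) * (w - u) := by ring
      _ ≤ K * (w - u) := mul_le_mul_of_nonneg_right h5 hwu0
  have hKfin : K * (w - u) < K * (ε/(2*K)) := by
    apply mul_lt_mul_of_pos_left _ hK0
    exact hwue
  have hKfin2 : K * (ε/(2*K)) = ε/2 := by field_simp
  calc |(AInt ω p c w - BInt ω w e r) - (AInt ω p c u - BInt ω u e r)|
      ≤ |AInt ω p c w - AInt ω p c u| + |BInt ω w e r - BInt ω u e r| := key
    _ ≤ ((1/2) * (ε/(2*M)) * M + (1/2) * wc ω (e - p) * (w - u))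
        + ((1/2) * (ε/(2*M)) * M + (1/2) * wc ω (r - c) * (w - u)) := add_le_add bA bB
    _ < ε := by
        have := hKsum.trans_lt (hKfin.trans_eq hKfin2)
        rw [hMM] at *
        linarith

/-- IVT-type balance at the supremum. -/
theorem balance_csSup {c e : ℝ} (hce : c ≤ e) (φ : ℝ → ℝ)
    (hφ : ContinuousOn φ (Set.Icc c e)) (hc : φ c ≤ 0) (he : 0 ≤ φ e) :
    sSup {v | v ∈ Set.Icc c e ∧ φ v ≤ 0} ∈ Set.Icc c e ∧
      φ (sSup {v | v ∈ Set.Icc c e ∧ φ v ≤ 0}) = 0 := by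
  set S := {v | v ∈ Set.Icc c e ∧ φ v ≤ 0} with hS
  have hne : S.Nonempty := ⟨c, ⟨le_rfl, hce⟩, hc⟩
  have hbdd : BddAbove S := ⟨e, fun x hx => hx.1.2⟩
  have hclosed : IsClosed S := by
    have hSeq : S = Set.Icc c e ∩ φ ⁻¹' (Set.Iic 0) := rfl
    rw [hSeq]
    exact hφ.preimage_isClosed_of_isClosed isClosed_Icc isClosed_Iic
  have hmem : sSup S ∈ S := hclosed.csSup_mem hne hbdd
  refine ⟨hmem.1, ?_⟩
  rcases eq_or_lt_of_le hmem.2 with heq | hlt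
  · exact heq
  · exfalso
    set s := sSup S with hs
    rcases eq_or_lt_of_le hmem.1.2 with hse | hse
    · rw [hse] at hlt; linarith
    · have hcw : ContinuousWithinAt φ (Set.Icc c e) s := hφ s hmem.1
      rw [Metric.continuousWithinAt_iff] at hcw
      obtain ⟨δ, hδ, hball⟩ := hcw (-(φ s)) (by linarith)
      set v' := min (s + δ/2) e with hv'
      have hv'I : v' ∈ Set.Icc c e := ⟨le_min (by linarith [hmem.1.1]) hce, min_le_right _ _⟩
      have hv's : s < v' := by
        rw [hv']
        rcases le_total (s + δ/2) e with h | h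
        · rw [min_eq_left h]; linarith
        · rw [min_eq_right h]; exact hse
      have hv'd : dist v' s < δ := by
        rw [Real.dist_eq, abs_of_nonneg (by linarith)]
        have : v' ≤ s + δ/2 := min_le_left _ _
        linarith
      have := hball hv'I hv'd
      rw [Real.dist_eq] at this
      have hφv' : φ v' < 0 := by
        cases abs_cases (φ v' - φ s) <;> linarith
      have : v' ∈ S := ⟨hv'I, le_of_lt hφv'⟩
      have := le_csSup hbdd this
      rw [← hs] at this
      linarith

end AB

/-- left neighbour (with phantom at index 0) -/
def pl (a b : ℝ) (z : ℕ → ℝ) : ℕ → ℝ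
  | 0 => 2*a - b
  | (k+1) => z k

/-- right neighbour (with phantom at index n-1) -/
def rrr (a b : ℝ) (n : ℕ) (z : ℕ → ℝ) (k : ℕ) : ℝ := if k + 1 = n then 2*b - a else z (k+1)

section Exists

variable (hω0 : ω 0 = 0) (hcont : ContinuousOn ω (Set.Ici 0))
  (hmono : MonotoneOn ω (Set.Ici 0))
  (hsub : ∀ s t : ℝ, 0 ≤ s → 0 ≤ t → ω (s + t) ≤ ω s + ω t)

include hω0 hcont hmono hsub in
theorem zexists (a b : ℝ) (hab : a < b) (n : ℕ) (hn : 0 < n) (t : ℕ → ℝ)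
    (ht0 : t 0 = a) (htn : t n = b) (tle : ∀ i j : ℕ, i ≤ j → j ≤ n → t i ≤ t j) :
    ∃ z : ℕ → ℝ, (∀ k, k < n → z k ∈ Set.Icc (t k) (t (k+1))) ∧
      (∀ k, k < n →
        AInt ω (pl a b z k) (t k) (z k) = BInt ω (z k) (t (k+1)) (rrr a b n z k)) := by
  haveI : Fact (a ≤ b) := ⟨hab.le⟩
  have ta : ∀ k, k ≤ n → a ≤ t k := fun k hk => ht0 ▸ tle 0 k (Nat.zero_le k) hk
  have tb : ∀ k, k ≤ n → t k ≤ b := fun k hk => htn ▸ tle k n hk le_rfl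
  -- clamped reading of a lattice element
  set zcl : (Fin n → (Set.Icc a b)) → ℕ → ℝ :=
    fun Z k => if h : k < n then max (t k) (min (t (k+1)) (Z ⟨k, h⟩ : ℝ)) else t k with hzcl
  have zcl_mem : ∀ Z k, k < n → zcl Z k ∈ Set.Icc (t k) (t (k+1)) := by
    intro Z k hk
    simp only [hzcl, dif_pos hk]
    constructor
    · exact le_max_left _ _
    · apply max_le (tle k (k+1) (Nat.le_succ k) hk)
      exact min_le_left _ _
  have zcl_mono : ∀ Z Z' : (Fin n → (Set.Icc a b)), Z ≤ Z' → ∀ k, zcl Z k ≤ zcl Z' k := by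
    intro Z Z' hZZ k
    simp only [hzcl]
    by_cases h : k < n
    · simp only [dif_pos h]
      have : (Z ⟨k, h⟩ : ℝ) ≤ (Z' ⟨k, h⟩ : ℝ) := hZZ ⟨k, h⟩
      exact max_le_max le_rfl (min_le_min le_rfl this)
    · simp only [dif_neg h]; exact le_rfl
  have hple : ∀ Z k, k < n → pl a b (zcl Z) k ≤ t k := by
    intro Z k hk
    cases k with
    | zero => show 2*a - b ≤ t 0; rw [ht0]; linarith
    | succ m =>
      show zcl Z m ≤ t (m+1)
      exact (zcl_mem Z m (by omega)).2
  have hrge : ∀ Z k, k < n → t (k+1) ≤ rrr a b n (zcl Z) k := by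
    intro Z k hk
    by_cases h : k + 1 = n
    · simp only [rrr, if_pos h]; rw [h, htn]; linarith
    · simp only [rrr, if_neg h]
      exact (zcl_mem Z (k+1) (by omega)).1
  have hpl_mono : ∀ Z Z' : (Fin n → (Set.Icc a b)), Z ≤ Z' → ∀ k,
      pl a b (zcl Z) k ≤ pl a b (zcl Z') k := by
    intro Z Z' hZZ k
    cases k with
    | zero => exact le_rfl
    | succ m => exact zcl_mono Z Z' hZZ m
  have hrr_mono : ∀ Z Z' : (Fin n → (Set.Icc a b)), Z ≤ Z' → ∀ k,
      rrr a b n (zcl Z) k ≤ rrr a b n (zcl Z') k := by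
    intro Z Z' hZZ k
    by_cases h : k + 1 = n
    · simp only [rrr, if_pos h]; exact le_rfl
    · simp only [rrr, if_neg h]; exact zcl_mono Z Z' hZZ (k+1)
  -- the balance sets
  set SS : (Fin n → (Set.Icc a b)) → ℕ → Set ℝ :=
    fun Z k => {v | v ∈ Set.Icc (t k) (t (k+1)) ∧
      AInt ω (pl a b (zcl Z) k) (t k) v - BInt ω v (t (k+1)) (rrr a b n (zcl Z) k) ≤ 0} with hSS
  have hSne : ∀ Z k, k < n → t k ∈ SS Z k := by
    intro Z k hk
    refine ⟨⟨le_rfl, tle k (k+1) (Nat.le_succ k) hk⟩, ?_⟩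
    have hA : AInt ω (pl a b (zcl Z) k) (t k) (t k) = 0 := intervalIntegral.integral_same
    have hB : 0 ≤ BInt ω (t k) (t (k+1)) (rrr a b n (zcl Z) k) :=
      BInt_nonneg hω0 hmono _ (tle k (k+1) (Nat.le_succ k) hk)
    rw [hA]; linarith
  have hSbdd : ∀ Z k, BddAbove (SS Z k) := fun Z k => ⟨t (k+1), fun x hx => hx.1.2⟩
  have hSsub : ∀ Z Z' : (Fin n → (Set.Icc a b)), Z ≤ Z' → ∀ k, k < n →
      SS Z k ⊆ SS Z' k := by
    intro Z Z' hZZ k hk v hv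
    refine ⟨hv.1, ?_⟩
    have h1 : AInt ω (pl a b (zcl Z') k) (t k) v ≤ AInt ω (pl a b (zcl Z) k) (t k) v :=
      AInt_anti_p hcont hmono (hpl_mono Z Z' hZZ k) hv.1.1
    have h2 : BInt ω v (t (k+1)) (rrr a b n (zcl Z) k)
        ≤ BInt ω v (t (k+1)) (rrr a b n (zcl Z') k) :=
      BInt_mono_r hcont hmono (hrr_mono Z Z' hZZ k) hv.1.2
    have := hv.2
    linarith
  -- balance at the sup
  have hbal : ∀ Z : (Fin n → (Set.Icc a b)), ∀ k, k < n →
      sSup (SS Z k) ∈ Set.Icc (t k) (t (k+1)) ∧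
      AInt ω (pl a b (zcl Z) k) (t k) (sSup (SS Z k))
        = BInt ω (sSup (SS Z k)) (t (k+1)) (rrr a b n (zcl Z) k) := by
    intro Z k hk
    have hce : t k ≤ t (k+1) := tle k (k+1) (Nat.le_succ k) hk
    have := balance_csSup hce
      (fun v => AInt ω (pl a b (zcl Z) k) (t k) v - BInt ω v (t (k+1)) (rrr a b n (zcl Z) k))
      (phi_contOn hω0 hcont hmono hsub (hple Z k hk) hce (hrge Z k hk))
      (by
        have hA : AInt ω (pl a b (zcl Z) k) (t k) (t k) = 0 := intervalIntegral.integral_same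
        have hB : 0 ≤ BInt ω (t k) (t (k+1)) (rrr a b n (zcl Z) k) :=
          BInt_nonneg hω0 hmono _ hce
        simp only [hA]; linarith)
      (by
        have hB : BInt ω (t (k+1)) (t (k+1)) (rrr a b n (zcl Z) k) = 0 :=
          intervalIntegral.integral_same
        have hA : 0 ≤ AInt ω (pl a b (zcl Z) k) (t k) (t (k+1)) :=
          AInt_nonneg hω0 hmono _ hce
        simp only [hB]; linarith)
    obtain ⟨hmem, heq⟩ := this
    exact ⟨hmem, sub_eq_zero.mp heq⟩
  -- the monotone map
  have habmem : ∀ Z : (Fin n → (Set.Icc a b)), ∀ i : Fin n,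
      sSup (SS Z i.val) ∈ Set.Icc a b := by
    intro Z i
    have h := (hbal Z i.val i.isLt).1
    exact ⟨(ta i.val (le_of_lt i.isLt)).trans h.1,
      h.2.trans (tb (i.val+1) i.isLt)⟩
  set Tm : (Fin n → (Set.Icc a b)) → (Fin n → (Set.Icc a b)) :=
    fun Z i => ⟨sSup (SS Z i.val), habmem Z i⟩ with hTm
  have hTmono : Monotone Tm := by
    intro Z Z' hZZ i
    show sSup (SS Z i.val) ≤ sSup (SS Z' i.val)
    exact csSup_le_csSup (hSbdd Z' i.val) ⟨t i.val, hSne Z i.val i.isLt⟩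
      (hSsub Z Z' hZZ i.val i.isLt)
  set F : (Fin n → (Set.Icc a b)) →o (Fin n → (Set.Icc a b)) := ⟨Tm, hTmono⟩ with hF
  set Zs := F.lfp with hZs
  have hfix : F Zs = Zs := F.map_lfp
  -- extract
  refine ⟨zcl Zs, ?_, ?_⟩
  all_goals
    have hZval : ∀ k, ∀ hk : k < n, (Zs ⟨k, hk⟩ : ℝ) = sSup (SS Zs k) := by
      intro k hk
      conv_lhs => rw [← hfix]
      rfl
  all_goals
    have hzval : ∀ k, k < n → zcl Zs k = sSup (SS Zs k) := by
      intro k hk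
      have hmem := (hbal Zs k hk).1
      simp only [hzcl, dif_pos hk, hZval k hk]
      rw [min_eq_right hmem.2, max_eq_right hmem.1]
  · intro k hk
    rw [hzval k hk]
    exact (hbal Zs k hk).1
  · intro k hk
    have hkey := (hbal Zs k hk).2
    have e1 : pl a b (zcl Zs) k = pl a b (zcl Zs) k := rfl
    rw [hzval k hk]
    exact hkey

end Exists

/-- distance to the set of crossing points -/
noncomputable def dZ (n : ℕ) (hn : 0 < n) (z : ℕ → ℝ) (x : ℝ) : ℝ :=
  Finset.univ.inf' ⟨⟨0, hn⟩, Finset.mem_univ _⟩ (fun i : Fin n => |x - z i|)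

/-- alternating sign -/
noncomputable def sgn (n : ℕ) (z : ℕ → ℝ) (x : ℝ) : ℝ :=
  (-1)^((Finset.univ.filter (fun i : Fin n => z i < x)).card)

/-- the derivative of the spline -/
noncomputable def gfun (ω : ℝ → ℝ) (n : ℕ) (hn : 0 < n) (z : ℕ → ℝ) (x : ℝ) : ℝ :=
  sgn n z x * ((1/2) * wc ω (2 * dZ n hn z x))

section G

variable {n : ℕ} {hn : 0 < n} {z : ℕ → ℝ}

theorem dZ_nonneg (x : ℝ) : 0 ≤ dZ n hn z x :=
  Finset.le_inf' _ _ (fun i _ => abs_nonneg _)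

theorem dZ_le (x : ℝ) (i : Fin n) : dZ n hn z x ≤ |x - z i| :=
  Finset.inf'_le _ (Finset.mem_univ i)

theorem dZ_exists (x : ℝ) : ∃ i : Fin n, dZ n hn z x = |x - z i| := by
  obtain ⟨i, _, hi⟩ := Finset.exists_mem_eq_inf' (⟨⟨0, hn⟩, Finset.mem_univ _⟩ :
    (Finset.univ : Finset (Fin n)).Nonempty) (fun i : Fin n => |x - z i|)
  exact ⟨i, hi⟩

theorem dZ_ge (x : ℝ) (c : ℝ) (h : ∀ i : Fin n, c ≤ |x - z i|) : c ≤ dZ n hn z x :=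
  Finset.le_inf' _ _ (fun i _ => h i)

theorem dZ_lip (x y : ℝ) : |dZ n hn z x - dZ n hn z y| ≤ |x - y| := by
  rw [abs_sub_le_iff]
  constructor
  · obtain ⟨i, hi⟩ := dZ_exists (hn := hn) (z := z) y
    have h1 : dZ n hn z x ≤ |x - z i| := dZ_le x i
    have h2 : |x - z i| ≤ |x - y| + |y - z i| := abs_sub_le x y (z i)
    rw [hi]; linarith
  · obtain ⟨i, hi⟩ := dZ_exists (hn := hn) (z := z) x
    have h1 : dZ n hn z y ≤ |y - z i| := dZ_le y i
    have h2 : |y - z i| ≤ |y - x| + |x - z i| := abs_sub_le y x (z i)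
    rw [hi, abs_sub_comm y x] at *
    linarith

theorem sgn_abs (x : ℝ) : |sgn n z x| = 1 := by
  rw [sgn, abs_pow, abs_neg, abs_one, one_pow]

theorem sgn_vals (x : ℝ) : sgn n z x = 1 ∨ sgn n z x = -1 := by
  rcases Nat.even_or_odd ((Finset.univ.filter (fun i : Fin n => z i < x)).card) with h | h
  · left; rw [sgn, h.neg_one_pow]
  · right; rw [sgn, h.neg_one_pow]

theorem card_filter_val_lt (n m : ℕ) (hm : m ≤ n) :
    ((Finset.univ : Finset (Fin n)).filter (fun i => i.val < m)).card = m := by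
  rcases eq_or_lt_of_le hm with rfl | h
  · have he : (Finset.univ.filter (fun i : Fin m => i.val < m)) = Finset.univ := by
      apply Finset.filter_true_of_mem; intro i _; exact i.isLt
    rw [he, Finset.card_univ, Fintype.card_fin]
  · have he : (Finset.univ.filter (fun i : Fin n => i.val < m)) = Finset.Iio ⟨m, h⟩ := by
      ext i
      simp [Finset.mem_Iio, Fin.lt_def]
    rw [he, Fin.card_Iio]

variable (hω0 : ω 0 = 0) (hcont : ContinuousOn ω (Set.Ici 0))
  (hmono : MonotoneOn ω (Set.Ici 0))
  (hsub : ∀ s t : ℝ, 0 ≤ s → 0 ≤ t → ω (s + t) ≤ ω s + ω t)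

include hω0 hmono in
theorem gfun_abs (x : ℝ) : |gfun ω n hn z x| = (1/2) * wc ω (2 * dZ n hn z x) := by
  rw [gfun, abs_mul, sgn_abs, one_mul, abs_mul,
    abs_of_nonneg (wc_nonneg hω0 hmono _)]
  norm_num

include hω0 hcont hmono in
theorem gfun_cont : Continuous (gfun ω n hn z) := by
  have hdc : Continuous (dZ n hn z) := by
    rw [Metric.continuous_iff]
    intro x ε hε
    refine ⟨ε, hε, fun y hy => ?_⟩
    rw [Real.dist_eq] at *
    exact lt_of_le_of_lt (dZ_lip _ _) hy
  have huc : Continuous (fun x => (1/2) * wc ω (2 * dZ n hn z x)) := by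
    apply continuous_const.mul
    exact (wc_cont hcont).comp (continuous_const.mul hdc)
  rw [continuous_iff_continuousAt]
  intro x₀
  rcases eq_or_lt_of_le (dZ_nonneg (hn := hn) (z := z) x₀) with h0 | h0
  · -- squeeze at a zero of dZ
    have hg0 : gfun ω n hn z x₀ = 0 := by
      rw [gfun, ← h0]
      simp [wc, hω0]
    rw [ContinuousAt, hg0]
    have hb : ∀ x, ‖gfun ω n hn z x‖ ≤ (1/2) * wc ω (2 * dZ n hn z x) := by
      intro x
      rw [Real.norm_eq_abs, gfun_abs hω0 hmono]
    have hlim : Filter.Tendsto (fun x => (1/2) * wc ω (2 * dZ n hn z x)) (nhds x₀) (nhds 0) := by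
      have := huc.continuousAt (x := x₀)
      rw [ContinuousAt] at this
      have he : (1/2) * wc ω (2 * dZ n hn z x₀) = 0 := by
        rw [← h0]; simp [wc, hω0]
      rwa [he] at this
    exact squeeze_zero_norm hb hlim
  · -- locally constant sign
    have hev : ∀ᶠ x in nhds x₀, sgn n z x = sgn n z x₀ := by
      have hball : ∀ x, |x - x₀| < dZ n hn z x₀ → sgn n z x = sgn n z x₀ := by
        intro x hx
        have : ∀ i : Fin n, (z i < x ↔ z i < x₀) := by
          intro i
          have hi := dZ_le (hn := hn) (z := z) x₀ i
          constructor
          · intro h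
            by_contra hc
            push_neg at hc
            have : |x₀ - z i| = z i - x₀ := by rw [abs_sub_comm, abs_of_nonneg (by linarith)]
            rw [this] at hi
            cases abs_cases (x - x₀) <;> linarith
          · intro h
            by_contra hc
            push_neg at hc
            have : |x₀ - z i| = x₀ - z i := abs_of_nonneg (by linarith)
            rw [this] at hi
            cases abs_cases (x - x₀) <;> linarith
        have hset : (Finset.univ.filter (fun i : Fin n => z i < x))
            = (Finset.univ.filter (fun i : Fin n => z i < x₀)) := by
          ext i
          simp only [Finset.mem_filter, Finset.mem_univ, true_and]
          exact this i
        unfold sgn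
        rw [hset]
      rw [Metric.eventually_nhds_iff]
      exact ⟨dZ n hn z x₀, h0, fun {x} hx => hball x (by rwa [Real.dist_eq] at hx)⟩
    have : ContinuousAt (fun x => sgn n z x₀ * ((1/2) * wc ω (2 * dZ n hn z x))) x₀ :=
      (continuous_const.mul huc).continuousAt
    apply this.congr
    rw [Filter.eventuallyEq_iff_exists_mem]
    exact ⟨{x | sgn n z x = sgn n z x₀}, hev, fun x hx => by
      simp only [Set.mem_setOf_eq] at hx
      rw [gfun, hx]⟩

include hω0 hmono hsub in
theorem gfun_holder (hconc : ∀ p q : ℝ, 0 ≤ p → 0 ≤ q → ω p + ω q ≤ 2 * ω ((p+q)/2))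
    (s x : ℝ) : |gfun ω n hn z x - gfun ω n hn z s| ≤ ω |x - s| := by
  have key : ∀ s x : ℝ, s ≤ x → |gfun ω n hn z x - gfun ω n hn z s| ≤ ω (x - s) := by
    intro s x hsx
    have hwceq : wc ω (x - s) = ω (x - s) := wc_eq (by linarith)
    by_cases hsgn : sgn n z x = sgn n z s
    · have hcomp : gfun ω n hn z x - gfun ω n hn z s
          = sgn n z x * ((1/2) * wc ω (2 * dZ n hn z x) - (1/2) * wc ω (2 * dZ n hn z s)) := by
        rw [gfun, gfun, hsgn]; ring
      rw [hcomp, abs_mul, sgn_abs, one_mul]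
      have h1 : |(1/2) * wc ω (2 * dZ n hn z x) - (1/2) * wc ω (2 * dZ n hn z s)|
          = (1/2) * |wc ω (2 * dZ n hn z x) - wc ω (2 * dZ n hn z s)| := by
        rw [← mul_sub, abs_mul]; norm_num
      rw [h1]
      have h2 : |wc ω (2 * dZ n hn z x) - wc ω (2 * dZ n hn z s)|
          ≤ wc ω (2 * (x - s)) := by
        refine (wc_diff hmono hsub _ _).trans (wc_mono hmono ?_)
        have := dZ_lip (n := n) (hn := hn) (z := z) x s
        have habs : |2 * dZ n hn z x - 2 * dZ n hn z s| = 2 * |dZ n hn z x - dZ n hn z s| := by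
          rw [← mul_sub, abs_mul]; norm_num
        rw [habs]
        rw [abs_of_nonneg (by linarith : (0:ℝ) ≤ x - s)] at this
        linarith
      have h3 : wc ω (2 * (x - s)) ≤ 2 * wc ω (x - s) := by
        have := wc_sub hmono hsub (x - s) (x - s)
        calc wc ω (2 * (x-s)) = wc ω ((x-s) + (x-s)) := by ring_nf
          _ ≤ 2 * wc ω (x - s) := by linarith
      rw [← hwceq]
      linarith
    · -- sign change: there is a crossing point between s and x
      have hsubs : (Finset.univ.filter (fun i : Fin n => z i < s))
          ⊆ (Finset.univ.filter (fun i : Fin n => z i < x)) := by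
        intro i hi
        simp only [Finset.mem_filter, Finset.mem_univ, true_and] at *
        linarith
      have hne : (Finset.univ.filter (fun i : Fin n => z i < s))
          ≠ (Finset.univ.filter (fun i : Fin n => z i < x)) := by
        intro h
        apply hsgn
        unfold sgn
        rw [h]
      obtain ⟨i, hix, his⟩ := Finset.exists_of_ssubset (hsubs.ssubset_of_ne hne)
      simp only [Finset.mem_filter, Finset.mem_univ, true_and] at hix his
      push_neg at his
      have hd1 : dZ n hn z x ≤ x - z i := by
        have := dZ_le (hn := hn) (z := z) x i
        rwa [abs_of_nonneg (by linarith)] at this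
      have hd2 : dZ n hn z s ≤ z i - s := by
        have := dZ_le (hn := hn) (z := z) s i
        rwa [abs_of_nonpos (by linarith), neg_sub] at this
      have habs : |gfun ω n hn z x - gfun ω n hn z s|
          ≤ (1/2) * wc ω (2 * dZ n hn z x) + (1/2) * wc ω (2 * dZ n hn z s) := by
        refine (abs_sub _ _).trans ?_
        rw [gfun_abs hω0 hmono, gfun_abs hω0 hmono]
      have hm1 : wc ω (2 * dZ n hn z x) ≤ ω (2 * (x - z i)) := by
        rw [← wc_eq (ω := ω) (by linarith : (0:ℝ) ≤ 2 * (x - z i))]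
        exact wc_mono hmono (by linarith [dZ_nonneg (n := n) (hn := hn) (z := z) x])
      have hm2 : wc ω (2 * dZ n hn z s) ≤ ω (2 * (z i - s)) := by
        rw [← wc_eq (ω := ω) (by linarith : (0:ℝ) ≤ 2 * (z i - s))]
        exact wc_mono hmono (by linarith [dZ_nonneg (n := n) (hn := hn) (z := z) s])
      have hcc := hconc (2 * (x - z i)) (2 * (z i - s)) (by linarith) (by linarith)
      have heq2 : (2 * (x - z i) + 2 * (z i - s))/2 = x - s := by ring
      rw [heq2] at hcc
      linarith
  rcases le_total s x with h | h
  · rw [abs_of_nonneg (by linarith : (0:ℝ) ≤ x - s)]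
    exact key s x h
  · rw [abs_of_nonpos (by linarith : x - s ≤ 0), neg_sub, abs_sub_comm]
    exact key x s h

end G

section Region

variable {n : ℕ} {hn : 0 < n} {z : ℕ → ℝ} {a b : ℝ} {t : ℕ → ℝ}
variable (hω0 : ω 0 = 0) (hmono : MonotoneOn ω (Set.Ici 0))

theorem abs_sub_eq1 {u v : ℝ} (h : v ≤ u) : |u - v| = u - v := abs_of_nonneg (by linarith)
theorem abs_sub_eq2 {u v : ℝ} (h : u ≤ v) : |u - v| = v - u := by
  rw [abs_of_nonpos (by linarith), neg_sub]

theorem zmono_of (hnn : 0 < n) (tle : ∀ i j : ℕ, i ≤ j → j ≤ n → t i ≤ t j)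
    (hz : ∀ j, j < n → z j ∈ Set.Icc (t j) (t (j+1))) :
    ∀ i j : ℕ, i ≤ j → j < n → z i ≤ z j := by
  intro i j hij hj
  rcases eq_or_lt_of_le hij with rfl | hlt
  · exact le_rfl
  · have h1 : z i ≤ t (i+1) := (hz i (by omega)).2
    have h2 : t (i+1) ≤ t j := tle (i+1) j (by omega) (by omega)
    have h3 : t j ≤ z j := (hz j hj).1
    linarith

include hω0 hmono in
theorem gfun_eq_left (hab : a < b) (ht0 : t 0 = a) (htn : t n = b)
    (tle : ∀ i j : ℕ, i ≤ j → j ≤ n → t i ≤ t j)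
    (hz : ∀ j, j < n → z j ∈ Set.Icc (t j) (t (j+1)))
    (k : ℕ) (hk : k < n) (x : ℝ) (hx : x ∈ Set.Icc (t k) (z k)) :
    gfun ω n hn z x = (-1:ℝ)^k * bump ω (pl a b z k) (z k) x := by
  obtain ⟨hx1, hx2⟩ := hx
  have zmono := zmono_of hn tle hz
  have za : ∀ j, j < n → a ≤ z j := fun j hj => by
    have := tle 0 j (Nat.zero_le _) (by omega)
    have := (hz j hj).1
    rw [ht0] at *
    linarith
  have zb : ∀ j, j < n → z j ≤ b := fun j hj => by
    have := tle (j+1) n (by omega) le_rfl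
    have := (hz j hj).2
    rw [htn] at *
    linarith
  have hta : a ≤ t k := by rw [← ht0]; exact tle 0 k (Nat.zero_le _) (by omega)
  have hPle : pl a b z k ≤ t k := by
    cases k with
    | zero => show 2*a - b ≤ t 0; rw [ht0]; linarith
    | succ m =>
      show z m ≤ t (m+1)
      exact (hz m (by omega)).2
  rcases eq_or_lt_of_le (dZ_nonneg (n := n) (hn := hn) (z := z) x) with h0 | h0
  · -- dZ x = 0 : both sides vanish
    obtain ⟨i, hi⟩ := dZ_exists (hn := hn) (z := z) x
    rw [← h0] at hi
    have hzi : z i = x := by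
      have := abs_eq_zero.mp hi.symm
      linarith
    have hmin : min (x - pl a b z k) (z k - x) = 0 := by
      by_cases hik : (i : ℕ) < k
      · cases k with
        | zero => omega
        | succ m =>
          have h1 : z i ≤ z m := zmono i m (by omega) (by omega)
          have h2 : z m ≤ t (m+1) := (hz m (by omega)).2
          have h3 : z m = x := by rw [← hzi] at hx1 ⊢; linarith
          show min (x - z m) (z (m+1) - x) = 0
          rw [h3, sub_self, min_eq_left (by linarith)]
      · have h1 : z k ≤ z i := zmono k i (by omega) i.isLt
        have h2 : z k = x := by rw [← hzi] at hx2 ⊢; linarith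
        rw [h2, sub_self, min_eq_right (by linarith)]
    rw [gfun, ← h0, bump, hmin]
    simp [wc, hω0]
  · -- dZ x > 0
    have hzx : ∀ i : Fin n, z i ≠ x := by
      intro i hzi
      have := dZ_le (hn := hn) (z := z) x i
      rw [hzi, sub_self, abs_zero] at this
      linarith
    have dmin : dZ n hn z x = min (x - pl a b z k) (z k - x) := by
      apply le_antisymm
      · apply le_min
        · cases k with
          | zero =>
            show dZ n hn z x ≤ x - (2*a - b)
            have h1 : dZ n hn z x ≤ |x - z 0| := dZ_le x ⟨0, hn⟩
            rw [abs_sub_eq2 hx2] at h1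
            have := zb 0 hn
            show dZ n hn z x ≤ x - (2*a - b)
            rw [ht0] at hx1
            linarith
          | succ m =>
            show dZ n hn z x ≤ x - z m
            have h2 : z m ≤ t (m+1) := (hz m (by omega)).2
            have h1 : dZ n hn z x ≤ |x - z m| := dZ_le x ⟨m, by omega⟩
            rw [abs_sub_eq1 (by linarith)] at h1
            exact h1
        · have h1 : dZ n hn z x ≤ |x - z k| := dZ_le x ⟨k, hk⟩
          rw [abs_sub_eq2 hx2] at h1
          exact h1
      · apply dZ_ge
        intro i
        by_cases hik : (i : ℕ) < k
        · cases k with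
          | zero => omega
          | succ m =>
            have h1 : z i ≤ z m := zmono i m (by omega) (by omega)
            have h2 : z m ≤ t (m+1) := (hz m (by omega)).2
            rw [abs_sub_eq1 (by linarith)]
            have : min (x - pl a b z (m+1)) (z (m+1) - x) ≤ x - z m := by
              refine (min_le_left _ _).trans ?_
              show x - z m ≤ x - z m
              exact le_rfl
            exact this.trans (by linarith)
        · have h1 : z k ≤ z i := zmono k i (by omega) i.isLt
          rw [abs_sub_eq2 (by linarith)]
          exact (min_le_right _ _).trans (by linarith)
    have scount : sgn n z x = (-1:ℝ)^k := by
      unfold sgn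
      congr 1
      have hset : (Finset.univ.filter (fun i : Fin n => z i < x))
          = (Finset.univ.filter (fun i : Fin n => (i : ℕ) < k)) := by
        ext i
        simp only [Finset.mem_filter, Finset.mem_univ, true_and]
        constructor
        · intro h
          by_contra hik
          push_neg at hik
          have : z k ≤ z i := zmono k i hik i.isLt
          linarith [hx2]
        · intro hik
          cases k with
          | zero => omega
          | succ m =>
            have h1 : z i ≤ z m := zmono i m (by omega) (by omega)
            have h2 : z m ≤ t (m+1) := (hz m (by omega)).2
            have := hzx i
            rcases lt_or_eq_of_le (by linarith : z i ≤ x) with h | h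
            · exact h
            · exact absurd h this
      rw [hset, card_filter_val_lt n k (by omega)]
    rw [gfun, scount, bump, ← dmin]

include hω0 hmono in
theorem gfun_eq_right (hab : a < b) (ht0 : t 0 = a) (htn : t n = b)
    (tle : ∀ i j : ℕ, i ≤ j → j ≤ n → t i ≤ t j)
    (hz : ∀ j, j < n → z j ∈ Set.Icc (t j) (t (j+1)))
    (k : ℕ) (hk : k < n) (x : ℝ) (hx : x ∈ Set.Icc (z k) (t (k+1))) :
    gfun ω n hn z x = (-1:ℝ)^(k+1) * bump ω (z k) (rrr a b n z k) x := by
  obtain ⟨hx1, hx2⟩ := hx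
  have zmono := zmono_of hn tle hz
  have za : ∀ j, j < n → a ≤ z j := fun j hj => by
    have := tle 0 j (Nat.zero_le _) (by omega)
    have := (hz j hj).1
    rw [ht0] at *
    linarith
  have htb : t (k+1) ≤ b := by rw [← htn]; exact tle (k+1) n (by omega) le_rfl
  have hrge : t (k+1) ≤ rrr a b n z k := by
    unfold rrr
    by_cases h : k + 1 = n
    · rw [if_pos h, h, htn]; linarith
    · rw [if_neg h]
      exact (hz (k+1) (by omega)).1
  rcases eq_or_lt_of_le (dZ_nonneg (n := n) (hn := hn) (z := z) x) with h0 | h0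
  · obtain ⟨i, hi⟩ := dZ_exists (hn := hn) (z := z) x
    rw [← h0] at hi
    have hzi : z i = x := by
      have := abs_eq_zero.mp hi.symm
      linarith
    have hmin : min (x - z k) (rrr a b n z k - x) = 0 := by
      by_cases hik : (i : ℕ) ≤ k
      · have h1 : z i ≤ z k := zmono i k hik hk
        have h2 : z k = x := by rw [← hzi] at hx1 ⊢; linarith
        rw [h2, sub_self, min_eq_left (by linarith)]
      · push_neg at hik
        have hkn : k + 1 < n := by omega
        have h1 : z (k+1) ≤ z i := zmono (k+1) i hik i.isLt
        have h2 : t (k+1) ≤ z (k+1) := (hz (k+1) hkn).1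
        have h3 : z (k+1) = x := by rw [← hzi] at hx2 ⊢; linarith
        have hrr : rrr a b n z k = z (k+1) := by
          unfold rrr; rw [if_neg (by omega)]
        rw [hrr, h3, sub_self, min_eq_right (by linarith)]
    rw [gfun, ← h0, bump, hmin]
    simp [wc, hω0]
  · have hzx : ∀ i : Fin n, z i ≠ x := by
      intro i hzi
      have := dZ_le (hn := hn) (z := z) x i
      rw [hzi, sub_self, abs_zero] at this
      linarith
    have dmin : dZ n hn z x = min (x - z k) (rrr a b n z k - x) := by
      apply le_antisymm
      · apply le_min
        · have h1 : dZ n hn z x ≤ |x - z k| := dZ_le x ⟨k, hk⟩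
          rwa [abs_sub_eq1 hx1] at h1
        · by_cases h : k + 1 = n
          · have hrr : rrr a b n z k = 2*b - a := by unfold rrr; rw [if_pos h]
            have h1 : dZ n hn z x ≤ |x - z k| := dZ_le x ⟨k, hk⟩
            rw [abs_sub_eq1 hx1] at h1
            have h2 : x ≤ b := by linarith
            have h3 : a ≤ z k := za k hk
            rw [hrr]
            linarith
          · have hrr : rrr a b n z k = z (k+1) := by unfold rrr; rw [if_neg h]
            have h1 : dZ n hn z x ≤ |x - z (k+1)| := dZ_le x ⟨k+1, by omega⟩
            have h2 : t (k+1) ≤ z (k+1) := (hz (k+1) (by omega)).1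
            rw [abs_sub_eq2 (by linarith)] at h1
            rw [hrr]
            exact h1
      · apply dZ_ge
        intro i
        by_cases hik : (i : ℕ) ≤ k
        · have h1 : z i ≤ z k := zmono i k hik hk
          rw [abs_sub_eq1 (by linarith)]
          exact (min_le_left _ _).trans (by linarith)
        · push_neg at hik
          have hkn : k + 1 < n := by omega
          have h1 : z (k+1) ≤ z i := zmono (k+1) i hik i.isLt
          have h2 : t (k+1) ≤ z (k+1) := (hz (k+1) hkn).1
          have hrr : rrr a b n z k = z (k+1) := by unfold rrr; rw [if_neg (by omega)]
          rw [abs_sub_eq2 (by linarith)]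
          rw [hrr]
          exact (min_le_right _ _).trans (by linarith)
    have scount : sgn n z x = (-1:ℝ)^(k+1) := by
      unfold sgn
      congr 1
      have hset : (Finset.univ.filter (fun i : Fin n => z i < x))
          = (Finset.univ.filter (fun i : Fin n => (i : ℕ) < k+1)) := by
        ext i
        simp only [Finset.mem_filter, Finset.mem_univ, true_and]
        constructor
        · intro h
          by_contra hik
          push_neg at hik
          have hkn : k + 1 < n := by omega
          have h1 : z (k+1) ≤ z i := zmono (k+1) i (by omega) i.isLt
          have h2 : t (k+1) ≤ z (k+1) := (hz (k+1) hkn).1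
          linarith
        · intro hik
          have h1 : z i ≤ z k := zmono i k (by omega) hk
          have := hzx i
          rcases lt_or_eq_of_le (by linarith : z i ≤ x) with h | h
          · exact h
          · exact absurd h this
      rw [hset, card_filter_val_lt n (k+1) (by omega)]
    rw [gfun, scount, bump, ← dmin]

end Region

end OmegaSplineAux


open OmegaSplineAux

/-- A modulus of continuity: `ω 0 = 0`, continuous, non-decreasing and subadditive on `[0, ∞)`. -/
def IsModulus (ω : ℝ → ℝ) : Prop :=
  ω 0 = 0 ∧ ContinuousOn ω (Set.Ici 0) ∧ MonotoneOn ω (Set.Ici 0) ∧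
    ∀ s t : ℝ, 0 ≤ s → 0 ≤ t → ω (s + t) ≤ ω s + ω t

/-- The class `H^ω([a,b], E)`. -/
def HHolder {E : Type*} [NormedAddCommGroup E] (ω : ℝ → ℝ) (a b : ℝ) (f : ℝ → E) : Prop :=
  ∀ s ∈ Set.Icc a b, ∀ t ∈ Set.Icc a b, ‖f t - f s‖ ≤ ω |t - s|


/-- Existence of an `ω`-spline from `W¹H^ω([a,b],ℝ)` vanishing at all partition points and
having uniform norm at least `(1/4) ∫_0^{(b−a)/n} ω(u) du` (concave modulus). -/
theorem omega_spline_exists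
    (ω : ℝ → ℝ) (hω : IsModulus ω) (hconc : ConcaveOn ℝ (Set.Ici 0) ω)
    (a b : ℝ) (hab : a < b) (n : ℕ) (hn : 0 < n)
    (t : ℕ → ℝ) (ht0 : t 0 = a) (htn : t n = b) (htmono : ∀ i, i < n → t i < t (i + 1)) :
    ∃ f f' : ℝ → ℝ,
      (∀ u ∈ Set.Icc a b, HasDerivWithinAt f (f' u) (Set.Icc a b) u) ∧
      HHolder ω a b f' ∧
      (∀ i ≤ n, f (t i) = 0) ∧
      ∃ u ∈ Set.Icc a b, (1 / 4) * ∫ s in (0:ℝ)..((b - a) / (n : ℝ)), ω s ≤ |f u| := by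
  obtain ⟨hω0, hcont, hmono, hsub⟩ := hω
  have hconc2 : ∀ p q : ℝ, 0 ≤ p → 0 ≤ q → ω p + ω q ≤ 2 * ω ((p+q)/2) := by
    intro p q hp hq
    have := hconc.2 (Set.mem_Ici.2 hp) (Set.mem_Ici.2 hq)
      (by norm_num : (0:ℝ) ≤ (1/2:ℝ)) (by norm_num : (0:ℝ) ≤ (1/2:ℝ)) (by norm_num)
    simp only [smul_eq_mul] at this
    have heq : (1/2:ℝ)*p + (1/2)*q = (p+q)/2 := by ring
    rw [heq] at this
    linarith
  have tlt : ∀ i j : ℕ, i < j → j ≤ n → t i < t j := by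
    intro i j hij hjn
    induction j with
    | zero => omega
    | succ m ih =>
      rcases Nat.lt_or_ge i m with h | h
      · exact lt_trans (ih h (by omega)) (htmono m (by omega))
      · have hieq : i = m := by omega
        subst hieq
        exact htmono i (by omega)
  have tle : ∀ i j : ℕ, i ≤ j → j ≤ n → t i ≤ t j := by
    intro i j hij hjn
    rcases eq_or_lt_of_le hij with rfl | h
    · exact le_rfl
    · exact (tlt i j h hjn).le
  obtain ⟨z, hz, hbal⟩ := zexists hω0 hcont hmono hsub a b hab n hn t ht0 htn tle
  set g := gfun ω n hn z with hg
  have hgcont : Continuous g := gfun_cont hω0 hcont hmono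
  set f : ℝ → ℝ := fun x => ∫ s in a..x, g s with hf
  have hderiv : ∀ u : ℝ, HasDerivAt f (g u) u := fun u =>
    intervalIntegral.integral_hasDerivAt_right ((hgcont.intervalIntegrable a u) : IntervalIntegrable g volume a u)
      (hgcont.stronglyMeasurableAtFilter _ _) hgcont.continuousAt
  -- basic bounds
  have za : ∀ j, j < n → a ≤ z j := fun j hj => by
    have h1 := tle 0 j (Nat.zero_le _) (by omega)
    have h2 := (hz j hj).1
    rw [ht0] at h1
    linarith
  have zb : ∀ j, j < n → z j ≤ b := fun j hj => by
    have h1 := tle (j+1) n (by omega) le_rfl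
    have h2 := (hz j hj).2
    rw [htn] at h1
    linarith
  -- per-interval piece values
  have hleft : ∀ k, k < n → (∫ x in (t k)..(z k), g x)
      = (-1:ℝ)^k * AInt ω (pl a b z k) (t k) (z k) := by
    intro k hk
    have hEq : Set.EqOn g (fun x => (-1:ℝ)^k * bump ω (pl a b z k) (z k) x)
        (Set.uIcc (t k) (z k)) := by
      intro x hx
      rw [Set.uIcc_of_le (hz k hk).1] at hx
      exact gfun_eq_left hω0 hmono hab ht0 htn tle hz k hk x hx
    rw [intervalIntegral.integral_congr hEq, intervalIntegral.integral_const_mul]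
    rfl
  have hright : ∀ k, k < n → (∫ x in (z k)..(t (k+1)), g x)
      = (-1:ℝ)^(k+1) * BInt ω (z k) (t (k+1)) (rrr a b n z k) := by
    intro k hk
    have hEq : Set.EqOn g (fun x => (-1:ℝ)^(k+1) * bump ω (z k) (rrr a b n z k) x)
        (Set.uIcc (z k) (t (k+1))) := by
      intro x hx
      rw [Set.uIcc_of_le (hz k hk).2] at hx
      exact gfun_eq_right hω0 hmono hab ht0 htn tle hz k hk x hx
    rw [intervalIntegral.integral_congr hEq, intervalIntegral.integral_const_mul]
    rfl
  have hint : ∀ k, k < n → (∫ x in (t k)..(t (k+1)), g x) = 0 := by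
    intro k hk
    have hadd := intervalIntegral.integral_add_adjacent_intervals
      ((hgcont.intervalIntegrable (t k) (z k)) : IntervalIntegrable g volume _ _) ((hgcont.intervalIntegrable (z k) (t (k+1))) : IntervalIntegrable g volume _ _)
    rw [hleft k hk, hright k hk, hbal k hk] at hadd
    rw [← hadd, pow_succ]
    ring
  have fvanish : ∀ k, k ≤ n → f (t k) = 0 := by
    intro k
    induction k with
    | zero =>
      intro _
      show (∫ s in a..(t 0), g s) = 0
      rw [ht0, intervalIntegral.integral_same]
    | succ m ih =>
      intro hm
      have h0 := ih (by omega)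
      have hadd := intervalIntegral.integral_add_adjacent_intervals
        ((hgcont.intervalIntegrable a (t m)) : IntervalIntegrable g volume _ _) ((hgcont.intervalIntegrable (t m) (t (m+1))) : IntervalIntegrable g volume _ _)
      show (∫ s in a..(t (m+1)), g s) = 0
      rw [← hadd, hint m (by omega)]
      have : (∫ s in a..(t m), g s) = 0 := h0
      rw [this]
      ring
  have hfz : ∀ k, k < n → |f (z k)| = AInt ω (pl a b z k) (t k) (z k) := by
    intro k hk
    have hadd := intervalIntegral.integral_add_adjacent_intervals
      ((hgcont.intervalIntegrable a (t k)) : IntervalIntegrable g volume _ _) ((hgcont.intervalIntegrable (t k) (z k)) : IntervalIntegrable g volume _ _)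
    have h1 : f (z k) = (-1:ℝ)^k * AInt ω (pl a b z k) (t k) (z k) := by
      show (∫ s in a..(z k), g s) = _
      rw [← hadd]
      have h2 : (∫ s in a..(t k), g s) = 0 := fvanish k (by omega)
      rw [h2, hleft k hk]
      ring
    rw [h1, abs_mul, abs_pow, abs_neg, abs_one, one_pow, one_mul]
    exact abs_of_nonneg (AInt_nonneg hω0 hmono _ (hz k hk).1)
  refine ⟨f, g, fun u _ => (hderiv u).hasDerivWithinAt, ?_, fvanish, ?_⟩
  · intro s _ x _
    rw [Real.norm_eq_abs]
    exact gfun_holder hω0 hmono hsub hconc2 s x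
  · -- the lower bound
    set hh : ℝ := (b - a) / (n : ℝ) with hhh
    have hh0 : 0 < hh := by
      apply div_pos (by linarith)
      exact_mod_cast hn
    have hnh : (n : ℝ) * hh = b - a := by
      rw [hhh]
      field_simp
    set T : ℝ := (1/4) * ∫ s in (0:ℝ)..hh, ω s with hT
    have hwT : (∫ s in (0:ℝ)..hh, ω s) = ∫ s in (0:ℝ)..hh, wc ω s := by
      apply intervalIntegral.integral_congr
      intro x hx
      rw [Set.uIcc_of_le hh0.le] at hx
      exact (wc_eq (ω := ω) hx.1).symm
    by_contra hcon
    push_neg at hcon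
    have hAlt : ∀ k, k < n → AInt ω (pl a b z k) (t k) (z k) < T := by
      intro k hk
      have := hcon (z k) ⟨za k hk, zb k hk⟩
      rw [hfz k hk] at this
      exact this
    have hBlt : ∀ k, k < n → BInt ω (z k) (t (k+1)) (rrr a b n z k) < T := by
      intro k hk
      rw [← hbal k hk]
      exact hAlt k hk
    -- first interval
    have hz0 : 2 * (z 0 - a) < hh := by
      by_contra hge
      push_neg at hge
      have hA0 : AInt ω (pl a b z 0) (t 0) (z 0)
          = (1/4) * ∫ u in (0:ℝ)..(2*(z 0 - t 0)), wc ω u := by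
        apply integ_right_tail hcont (hz 0 hn).1
        intro x hx
        have h1 : a ≤ x := by rw [← ht0]; exact hx.1
        have h2 : z 0 ≤ b := zb 0 hn
        show z 0 - x ≤ x - pl a b z 0
        show z 0 - x ≤ x - (2*a - b)
        linarith
      have hmono2 : (∫ u in (0:ℝ)..hh, wc ω u) ≤ ∫ u in (0:ℝ)..(2*(z 0 - t 0)), wc ω u := by
        apply wcint_mono hω0 hmono hcont hh0.le
        rw [ht0]
        linarith
      have := hAlt 0 hn
      rw [hA0, hT, hwT] at this
      linarith
    -- middle intervals
    have hmid : ∀ k, k + 1 < n → z (k+1) - z k < hh := by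
      intro k hk1
      by_contra hge
      push_neg at hge
      have hplk : pl a b z (k+1) = z k := rfl
      have hrrk : rrr a b n z k = z (k+1) := by
        unfold OmegaSplineAux.rrr
        rw [if_neg (by omega)]
      have hzz : z k ≤ z (k+1) := by
        have h1 := (hz k (by omega)).2
        have h2 := (hz (k+1) hk1).1
        linarith
      have hsum : BInt ω (z k) (t (k+1)) (rrr a b n z k)
            + AInt ω (pl a b z (k+1)) (t (k+1)) (z (k+1))
          = (1/2) * ∫ u in (0:ℝ)..(z (k+1) - z k), wc ω u := by
        rw [hplk, hrrk]
        unfold OmegaSplineAux.AInt OmegaSplineAux.BInt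
        rw [intervalIntegral.integral_add_adjacent_intervals
          (bump_intg hcont _ _ _ _) (bump_intg hcont _ _ _ _)]
        exact integ_bump_total hcont hzz
      have hmono2 : (∫ u in (0:ℝ)..hh, wc ω u) ≤ ∫ u in (0:ℝ)..(z (k+1) - z k), wc ω u :=
        wcint_mono hω0 hmono hcont hh0.le hge
      have h1 := hAlt (k+1) hk1
      have h2 := hBlt k (by omega)
      rw [hT, hwT] at h1 h2
      linarith
    -- last interval
    have hzlast : 2 * (b - z (n-1)) < hh := by
      by_contra hge
      push_neg at hge
      have hrrk : rrr a b n z (n-1) = 2*b - a := by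
        unfold OmegaSplineAux.rrr
        rw [if_pos (by omega)]
      have hBlast : BInt ω (z (n-1)) (t n) (rrr a b n z (n-1))
          = (1/4) * ∫ u in (0:ℝ)..(2*(t n - z (n-1))), wc ω u := by
        unfold OmegaSplineAux.BInt
        rw [hrrk]
        apply integ_left_tail ?_ ?_
        · have := (hz (n-1) (by omega)).2
          have hne : n - 1 + 1 = n := by omega
          rw [hne] at this
          exact this
        · intro x hx
          have h1 : x ≤ b := by rw [← htn]; exact hx.2
          have h2 : a ≤ z (n-1) := za (n-1) (by omega)
          linarith
      have hmono2 : (∫ u in (0:ℝ)..hh, wc ω u) ≤ ∫ u in (0:ℝ)..(2*(t n - z (n-1))), wc ω u := by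
        apply wcint_mono hω0 hmono hcont hh0.le
        rw [htn]
        linarith
      have h2 := hBlt (n-1) (by omega)
      have hne : n - 1 + 1 = n := by omega
      rw [hne] at h2
      rw [hBlast, hT, hwT] at h2
      linarith
    -- telescoping contradiction
    have htel : z (n-1) - z 0 = ∑ k ∈ Finset.range (n-1), (z (k+1) - z k) := by
      rw [Finset.sum_range_sub (fun k => z k)]
    have hsumle : (∑ k ∈ Finset.range (n-1), (z (k+1) - z k)) ≤ ((n:ℝ) - 1) * hh := by
      have := Finset.sum_le_card_nsmul (Finset.range (n-1)) (fun k => z (k+1) - z k) hh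
        (fun k hkk => by
          have hkr := Finset.mem_range.mp hkk
          exact (hmid k (by omega)).le)
      rw [Finset.card_range] at this
      have hcast : ((n-1 : ℕ) : ℝ) = (n:ℝ) - 1 := by
        have : (1:ℕ) ≤ n := hn
        push_cast [Nat.cast_sub this]
        ring
      rw [nsmul_eq_mul, hcast] at this
      exact this
    have hT0 : 0 ≤ T := by
      rw [hT, hwT]
      have : 0 ≤ ∫ s in (0:ℝ)..hh, wc ω s :=
        intervalIntegral.integral_nonneg hh0.le (fun u _ => wc_nonneg hω0 hmono u)
      linarith
    have : b - a < hh/2 + ((n:ℝ) - 1) * hh + hh/2 := by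
      have hd : b - a = (z 0 - a) + (z (n-1) - z 0) + (b - z (n-1)) := by ring
      rw [hd, htel]
      have h1 : z 0 - a < hh/2 := by linarith
      have h3 : b - z (n-1) < hh/2 := by linarith
      linarith [hsumle]
    rw [(by ring : hh/2 + ((n:ℝ) - 1) * hh + hh/2 = (n:ℝ) * hh), hnh] at this
    linarith
end

section
/- Optimal recovery of the derivative from function values at uniform knots on W^1H^ω: Let ω be a modulus of continuity, E a nontrivial real Banach space, a < b, n ≥ 1, and let t*_k = a + k(b−a)/n for k = 0, 1, …, n. Then the infimum, over all maps Φ: E^{n+1} → ([a,b] → E), of sup_{f ∈ W^1H^ω([a,b],E)} sup_{t∈[a,b]} ‖f′(t) − Φ(f(t*₀),…,f(t*_n))(t)‖ equals (n/(b−a))·∫_0^{(b−a)/n} ω(u) du. The infimum is attained by the method Φ* assigning the derivative of the interpolating polygonal line, namely Φ*(y₀,…,y_n)(t) = (n/(b−a))·(y_{k+1} − y_k) for t ∈ [t*_k, t*_{k+1}), k = 0,…,n−1, and Φ*(y₀,…,y_n)(b) = (n/(b−a))·(y_n − y_{n−1}). -/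
open MeasureTheory Set

/-- The class `W¹H^ω([a,b],E)`: `f` is differentiable on `[a,b]` with derivative `f'` belonging
to `H^ω([a,b],E)`. -/
def W1HHolder {E : Type*} [NormedAddCommGroup E] [NormedSpace ℝ E]
    (ω : ℝ → ℝ) (a b : ℝ) (f f' : ℝ → E) : Prop :=
  (∀ t ∈ Set.Icc a b, HasDerivWithinAt f (f' t) (Set.Icc a b) t) ∧ HHolder ω a b f'

/-- The index of the subinterval of the uniform partition containing `u`
(`u ∈ [t*_k, t*_{k+1})`, with the last index `n − 1` used at `u = b`). -/
noncomputable def unifIdx (a b : ℝ) (n : ℕ) (u : ℝ) : ℕ :=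
  min (n - 1) ⌊(u - a) * n / (b - a)⌋₊

/-- The uniform partition points `t*_k = a + k(b − a)/n`. -/
noncomputable def unifPt (a b : ℝ) (n : ℕ) : ℕ → ℝ :=
  fun k => a + (k : ℝ) * (b - a) / (n : ℝ)

/-- The method recovering the derivative: the derivative of the interpolating polygonal line,
`Φ*(y₀,…,y_n)(u) = (n/(b−a)) (y_{k+1} − y_k)` for `u ∈ [t*_k, t*_{k+1})` (and `k = n − 1` at
`u = b`). -/
noncomputable def polyDerivMethod {E : Type*} [NormedAddCommGroup E] [NormedSpace ℝ E]
    (a b : ℝ) (n : ℕ) (y : Fin (n + 1) → E) (u : ℝ) : E :=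
  if hn : 0 < n then
    ((n : ℝ) / (b - a)) •
      (y ⟨unifIdx a b n u + 1, by unfold unifIdx; omega⟩ -
        y ⟨unifIdx a b n u, by unfold unifIdx; omega⟩)
  else 0

namespace OptRec

variable {ω : ℝ → ℝ}

lemma mod_nonneg (hω : IsModulus ω) {x : ℝ} (hx : 0 ≤ x) : 0 ≤ ω x := by
  rw [← hω.1]
  exact hω.2.2.1 (le_refl (0:ℝ)) (mem_Ici.2 hx) hx

lemma mod_abs_sub (hω : IsModulus ω) {x y : ℝ} (hx : 0 ≤ x) (hy : 0 ≤ y) :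
    |ω x - ω y| ≤ ω |x - y| := by
  have key : ∀ u v : ℝ, 0 ≤ u → 0 ≤ v → v ≤ u → ω u - ω v ≤ ω (u - v) := by
    intro u v hu hv huv
    have h := hω.2.2.2 (u - v) v (by linarith) hv
    rw [sub_add_cancel] at h
    linarith
  rcases le_total y x with h | h
  · have h1 : ω y ≤ ω x := hω.2.2.1 (mem_Ici.2 hy) (mem_Ici.2 hx) h
    rw [abs_of_nonneg (by linarith : (0:ℝ) ≤ ω x - ω y), abs_of_nonneg (by linarith)]
    exact key x y hx hy h
  · have h1 : ω x ≤ ω y := hω.2.2.1 (mem_Ici.2 hx) (mem_Ici.2 hy) h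
    rw [abs_of_nonpos (by linarith : ω x - ω y ≤ 0), abs_of_nonpos (by linarith)]
    have := key y x hy hx h
    rw [neg_sub, neg_sub]
    linarith

lemma mod_intble (hω : IsModulus ω) {p q : ℝ} (hp : 0 ≤ p) (hq : 0 ≤ q) :
    IntervalIntegrable ω volume p q :=
  (hω.2.2.1.mono (fun x hx => le_trans (le_min hp hq) hx.1)).intervalIntegrable

lemma mod_int_superadd (hω : IsModulus ω) {α β : ℝ} (ha : 0 ≤ α) (hb : 0 ≤ β) :
    (∫ s in (0:ℝ)..α, ω s) + ∫ s in (0:ℝ)..β, ω s ≤ ∫ s in (0:ℝ)..(α + β), ω s := by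
  have hi1 : IntervalIntegrable ω volume 0 α := mod_intble hω le_rfl ha
  have hi2 : IntervalIntegrable ω volume α (α + β) := mod_intble hω ha (by linarith)
  have hadd := intervalIntegral.integral_add_adjacent_intervals (μ := volume) (f := ω) hi1 hi2
  have hmono : (∫ s in (0:ℝ)..β, ω s) ≤ ∫ s in (0:ℝ)..β, ω (s + α) := by
    apply intervalIntegral.integral_mono_on hb (mod_intble hω le_rfl hb)
    · have : MonotoneOn (fun s => ω (s + α)) (uIcc 0 β) := by
        intro x hx y hy hxy
        have hx0 : min 0 β ≤ x := hx.1
        have hy0 : min 0 β ≤ y := hy.1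
        have hmin : (0:ℝ) = min 0 β := (min_eq_left hb).symm
        exact hω.2.2.1 (mem_Ici.2 (by rw [hmin] at *; linarith))
          (mem_Ici.2 (by rw [hmin] at *; linarith)) (by linarith)
      exact this.intervalIntegrable
    · intro x hx
      exact hω.2.2.1 (mem_Ici.2 hx.1) (mem_Ici.2 (by linarith [hx.1])) (by linarith)
  have h2' : (∫ s in (0:ℝ)..β, ω (s + α)) = ∫ s in α..(α + β), ω s := by
    rw [show α + β = β + α by ring]
    simpa using intervalIntegral.integral_comp_add_right (a := (0:ℝ)) (b := β) ω α
  linarith [hadd, hmono, h2']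

end OptRec

namespace OptRec

lemma unifPt_eq (a b : ℝ) (n : ℕ) (k : ℕ) :
    unifPt a b n k = a + (k : ℝ) * ((b - a) / n) := by
  unfold unifPt; ring

lemma unifPt_succ_sub (a b : ℝ) (n : ℕ) (k : ℕ) :
    unifPt a b n (k + 1) - unifPt a b n k = (b - a) / n := by
  rw [unifPt_eq, unifPt_eq]; push_cast; ring

lemma unifIdx_bounds {a b : ℝ} (hab : a < b) {n : ℕ} (hn : 0 < n) {u : ℝ}
    (hu : u ∈ Icc a b) :
    unifPt a b n (unifIdx a b n u) ≤ u ∧ u ≤ unifPt a b n (unifIdx a b n u + 1) ∧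
      unifIdx a b n u + 1 ≤ n := by
  have hba : (0:ℝ) < b - a := by linarith [hu.1, hu.2, hab]
  have hn' : (0:ℝ) < n := by exact_mod_cast hn
  set x : ℝ := (u - a) * n / (b - a) with hx
  have hx0 : 0 ≤ x := by
    apply div_nonneg (mul_nonneg (by linarith [hu.1]) hn'.le) hba.le
  have hxn : x ≤ n := by
    rw [hx, div_le_iff₀ hba]
    have : u - a ≤ b - a := by linarith [hu.2]
    nlinarith
  have hba' : (b - a) ≠ 0 := ne_of_gt hba
  have hnne : (n:ℝ) ≠ 0 := ne_of_gt hn'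
  have hxval : x * ((b - a) / n) = u - a := by
    rw [hx]; field_simp
  set k := unifIdx a b n u with hk
  have hk_le_floor : k ≤ ⌊x⌋₊ := min_le_right _ _
  have hk_le : (k : ℝ) ≤ x := le_trans (by exact_mod_cast hk_le_floor) (Nat.floor_le hx0)
  have hkn : k + 1 ≤ n := by
    have : k ≤ n - 1 := min_le_left _ _
    omega
  refine ⟨?_, ?_, hkn⟩
  · rw [unifPt_eq]
    have : (k : ℝ) * ((b - a) / n) ≤ x * ((b - a) / n) :=
      mul_le_mul_of_nonneg_right hk_le (by positivity)
    linarith [hxval ▸ this]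
  · rw [unifPt_eq]
    have hxk1 : x ≤ (k : ℝ) + 1 := by
      rcases le_or_gt ⌊x⌋₊ (n - 1) with h | h
      · have hkf : k = ⌊x⌋₊ := by rw [hk]; unfold unifIdx; rw [← hx]; omega
        rw [hkf]
        exact (Nat.lt_floor_add_one x).le
      · have hkf : k = n - 1 := by rw [hk]; unfold unifIdx; rw [← hx]; omega
        have : (k : ℝ) + 1 = n := by rw [hkf]; push_cast [Nat.cast_sub hn]; ring
        linarith
    have : x * ((b - a) / n) ≤ ((k:ℝ) + 1) * ((b - a) / n) :=
      mul_le_mul_of_nonneg_right hxk1 (by positivity)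
    push_cast
    linarith [hxval ▸ this]

end OptRec

namespace OptRec

lemma cont_of_HHolder {E : Type*} [NormedAddCommGroup E] {ω : ℝ → ℝ} (hω : IsModulus ω)
    {a b : ℝ} {g : ℝ → E} (hH : HHolder ω a b g) : ContinuousOn g (Icc a b) := by
  intro t ht
  rw [Metric.continuousWithinAt_iff]
  intro ε hε
  have hω0 : ContinuousWithinAt ω (Ici 0) 0 := hω.2.1 0 self_mem_Ici
  rw [Metric.continuousWithinAt_iff] at hω0
  obtain ⟨δ, hδ, hδ'⟩ := hω0 ε hε
  refine ⟨δ, hδ, ?_⟩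
  intro s hs hst
  have h1 : ‖g s - g t‖ ≤ ω |s - t| := hH t ht s hs
  have h2 : dist (ω |s - t|) (ω 0) < ε := by
    apply hδ' (mem_Ici.2 (abs_nonneg _))
    rw [Real.dist_eq] at hst ⊢
    rw [sub_zero, abs_abs]
    exact hst
  rw [hω.1, Real.dist_eq, sub_zero] at h2
  rw [dist_eq_norm]
  calc ‖g s - g t‖ ≤ ω (|s - t|) := h1
    _ ≤ |ω (|s - t|)| := le_abs_self _
    _ < ε := h2

lemma part1 {E : Type*} [NormedAddCommGroup E] [NormedSpace ℝ E] [CompleteSpace E]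
    {ω : ℝ → ℝ} (hω : IsModulus ω) {a b : ℝ} (hab : a < b) {n : ℕ} (hn : 0 < n)
    (f f' : ℝ → E) (hf : W1HHolder ω a b f f') (u : ℝ) (hu : u ∈ Icc a b) :
    ‖f' u - polyDerivMethod a b n (fun i : Fin (n + 1) => f (unifPt a b n (i : ℕ))) u‖ ≤
      ((n : ℝ) / (b - a)) * ∫ s in (0:ℝ)..((b - a) / (n : ℝ)), ω s := by
  have hba : (0:ℝ) < b - a := by linarith
  have hn' : (0:ℝ) < n := by exact_mod_cast hn
  set h : ℝ := (b - a) / n with hh_def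
  have hh : 0 < h := by positivity
  obtain ⟨hpu, huq, hkn⟩ := unifIdx_bounds hab hn hu
  set k := unifIdx a b n u with hk_def
  set p := unifPt a b n k with hp_def
  set q := unifPt a b n (k + 1) with hq_def
  have hqp : q - p = h := unifPt_succ_sub a b n k
  have hpq_le : p ≤ q := by linarith
  have hkh : (0:ℝ) ≤ (k : ℝ) * h := by positivity
  have hap : a ≤ p := by rw [hp_def, unifPt_eq]; linarith
  have hnh : (n:ℝ) * h = b - a := by rw [hh_def]; field_simp
  have hqb : q ≤ b := by
    rw [hq_def, unifPt_eq]
    have h1 : ((k:ℕ) + 1 : ℝ) ≤ (n : ℝ) := by exact_mod_cast hkn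
    have h2 : (((k:ℕ) + 1 : ℕ) : ℝ) * h ≤ (n:ℝ) * h := by
      apply mul_le_mul_of_nonneg_right _ hh.le
      push_cast
      exact h1
    linarith
  have hIccsub : Icc p q ⊆ Icc a b := Icc_subset_Icc hap hqb
  have hf'cont : ContinuousOn f' (Icc a b) := cont_of_HHolder hω hf.2
  have hf'int : IntervalIntegrable f' volume p q := by
    apply ContinuousOn.intervalIntegrable
    rw [uIcc_of_le hpq_le]
    exact hf'cont.mono hIccsub
  have hFTC : (∫ s in p..q, f' s) = f q - f p := by
    apply intervalIntegral.integral_eq_sub_of_hasDeriv_right_of_le hpq_le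
    · exact fun t ht => ((hf.1 t (hIccsub ht)).continuousWithinAt).mono hIccsub
    · intro x hx
      have hxab : x ∈ Ioo a b := ⟨lt_of_le_of_lt hap hx.1, lt_of_lt_of_le hx.2 hqb⟩
      exact ((hf.1 x (Ioo_subset_Icc_self hxab)).hasDerivAt
        (Icc_mem_nhds hxab.1 hxab.2)).hasDerivWithinAt
    · exact hf'int
  have hmethod : polyDerivMethod a b n (fun i : Fin (n + 1) => f (unifPt a b n (i : ℕ))) u
      = ((n : ℝ) / (b - a)) • (f q - f p) := by
    unfold polyDerivMethod
    rw [dif_pos hn]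
  have hcoef : (n : ℝ) / (b - a) = h⁻¹ := by
    rw [hh_def, inv_div]
  rw [hmethod, hcoef, ← hFTC]
  have hconst : (∫ _ in p..q, f' u) = h • f' u := by
    rw [intervalIntegral.integral_const, hqp]
  have hfu : f' u = h⁻¹ • (h • f' u) := by
    rw [smul_smul, inv_mul_cancel₀ hh.ne', one_smul]
  have hsub : (∫ s in p..q, (f' u - f' s)) = (∫ _ in p..q, f' u) - ∫ s in p..q, f' s :=
    intervalIntegral.integral_sub intervalIntegrable_const hf'int
  have key : f' u - h⁻¹ • (∫ s in p..q, f' s) = h⁻¹ • ∫ s in p..q, (f' u - f' s) := by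
    rw [hsub, hconst, smul_sub]
    rw [smul_smul, inv_mul_cancel₀ hh.ne', one_smul]
  rw [key]
  rw [norm_smul, Real.norm_eq_abs, abs_of_pos (by positivity : (0:ℝ) < h⁻¹)]
  have hωuc : Continuous (fun s => ω |u - s|) :=
    hω.2.1.comp_continuous ((continuous_const.sub continuous_id).abs) (fun x => mem_Ici.2 (abs_nonneg _))
  have step1 : ‖∫ s in p..q, (f' u - f' s)‖ ≤ ∫ s in p..q, ‖f' u - f' s‖ :=
    intervalIntegral.norm_integral_le_integral_norm hpq_le
  have step2 : (∫ s in p..q, ‖f' u - f' s‖) ≤ ∫ s in p..q, ω |u - s| := by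
    apply intervalIntegral.integral_mono_on hpq_le
    · apply ContinuousOn.intervalIntegrable
      rw [uIcc_of_le hpq_le]
      exact ((continuousOn_const.sub (hf'cont.mono hIccsub)).norm)
    · exact hωuc.intervalIntegrable _ _
    · intro s hs
      exact hf.2 s (hIccsub hs) u hu
  have hsint1 : IntervalIntegrable (fun s => ω |u - s|) volume p u := hωuc.intervalIntegrable _ _
  have hsint2 : IntervalIntegrable (fun s => ω |u - s|) volume u q := hωuc.intervalIntegrable _ _
  have hsplit : (∫ s in p..u, ω |u - s|) + (∫ s in u..q, ω |u - s|) = ∫ s in p..q, ω |u - s| :=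
    intervalIntegral.integral_add_adjacent_intervals hsint1 hsint2
  have hleft : (∫ s in p..u, ω |u - s|) = ∫ s in (0:ℝ)..(u - p), ω s := by
    rw [intervalIntegral.integral_congr (g := fun s => ω (u - s)) ?_]
    · rw [intervalIntegral.integral_comp_sub_left ω u, sub_self]
    · intro s hs
      rw [uIcc_of_le hpu] at hs
      simp only
      rw [abs_of_nonneg (by linarith [hs.2] : (0:ℝ) ≤ u - s)]
  have hright : (∫ s in u..q, ω |u - s|) = ∫ s in (0:ℝ)..(q - u), ω s := by
    rw [intervalIntegral.integral_congr (g := fun s => ω (s - u)) ?_]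
    · rw [intervalIntegral.integral_comp_sub_right ω u, sub_self]
    · intro s hs
      rw [uIcc_of_le huq] at hs
      simp only
      rw [abs_sub_comm, abs_of_nonneg (by linarith [hs.1] : (0:ℝ) ≤ s - u)]
  have hsuper : (∫ s in (0:ℝ)..(u - p), ω s) + (∫ s in (0:ℝ)..(q - u), ω s)
      ≤ ∫ s in (0:ℝ)..h, ω s := by
    have := mod_int_superadd hω (by linarith : (0:ℝ) ≤ u - p) (by linarith : (0:ℝ) ≤ q - u)
    rw [show u - p + (q - u) = q - p by ring, hqp] at this
    exact this
  have final : (∫ s in p..q, ω |u - s|) ≤ ∫ s in (0:ℝ)..h, ω s := by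
    rw [← hsplit, hleft, hright]
    exact hsuper
  calc h⁻¹ * ‖∫ s in p..q, (f' u - f' s)‖
      ≤ h⁻¹ * ∫ s in p..q, ω |u - s| := by
        apply mul_le_mul_of_nonneg_left (le_trans step1 step2) (by positivity)
    _ ≤ h⁻¹ * ∫ s in (0:ℝ)..h, ω s := mul_le_mul_of_nonneg_left final (by positivity)

end OptRec

noncomputable def gridDist (a h s : ℝ) : ℝ :=
  Metric.infDist s (Set.range (fun m : ℤ => a + 2 * h * (m : ℝ)))

namespace OptRec

lemma gridDist_nonneg (a h s : ℝ) : 0 ≤ gridDist a h s := Metric.infDist_nonneg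

lemma gridDist_continuous (a h : ℝ) : Continuous (gridDist a h) :=
  (Metric.lipschitz_infDist_pt _).continuous

lemma gridDist_lip (a h s t : ℝ) : |gridDist a h s - gridDist a h t| ≤ |s - t| := by
  have h1 := Metric.infDist_le_infDist_add_dist (x := s) (y := t)
    (s := Set.range (fun m : ℤ => a + 2 * h * (m : ℝ)))
  have h2 := Metric.infDist_le_infDist_add_dist (x := t) (y := s)
    (s := Set.range (fun m : ℤ => a + 2 * h * (m : ℝ)))
  rw [Real.dist_eq] at h1 h2
  rw [abs_sub_comm] at h2
  unfold gridDist
  rw [abs_sub_le_iff]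
  constructor <;> linarith

lemma gridDist_a (a h : ℝ) : gridDist a h a = 0 :=
  Metric.infDist_zero_of_mem ⟨0, by norm_num⟩

lemma gridDist_even {a h : ℝ} (hh : 0 < h) (j : ℤ) {s : ℝ}
    (h1 : a + 2 * h * j ≤ s) (h2 : s ≤ a + 2 * h * j + h) :
    gridDist a h s = s - (a + 2 * h * j) := by
  have hmem : a + 2 * h * (j : ℝ) ∈ Set.range (fun m : ℤ => a + 2 * h * (m : ℝ)) := ⟨j, rfl⟩
  have hSne : (Set.range (fun m : ℤ => a + 2 * h * (m : ℝ))).Nonempty := ⟨_, hmem⟩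
  apply le_antisymm
  · have := Metric.infDist_le_dist_of_mem hmem (x := s)
    rwa [Real.dist_eq, abs_of_nonneg (by linarith)] at this
  · by_contra hlt
    push_neg at hlt
    obtain ⟨y, ⟨m, rfl⟩, hy⟩ := (Metric.infDist_lt_iff hSne).1 hlt
    rw [Real.dist_eq, abs_lt] at hy
    beta_reduce at hy
    rcases le_or_gt m j with hm | hm
    · have hmr : (m:ℝ) ≤ (j:ℝ) := by exact_mod_cast hm
      have hmj : 2 * h * (m:ℝ) ≤ 2 * h * (j:ℝ) := by nlinarith
      linarith [hy.2]
    · have hmr : (j:ℝ) + 1 ≤ (m:ℝ) := by exact_mod_cast hm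
      have hmj : 2 * h * ((j:ℝ) + 1) ≤ 2 * h * (m:ℝ) := by nlinarith
      linarith [hy.1]

lemma gridDist_odd {a h : ℝ} (hh : 0 < h) (j : ℤ) {s : ℝ}
    (h1 : a + 2 * h * j + h ≤ s) (h2 : s ≤ a + 2 * h * j + 2 * h) :
    gridDist a h s = a + 2 * h * j + 2 * h - s := by
  have hmem : a + 2 * h * j + 2 * h ∈ Set.range (fun m : ℤ => a + 2 * h * (m : ℝ)) :=
    ⟨j + 1, by push_cast; ring⟩
  have hSne : (Set.range (fun m : ℤ => a + 2 * h * (m : ℝ))).Nonempty := ⟨_, hmem⟩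
  apply le_antisymm
  · have := Metric.infDist_le_dist_of_mem hmem (x := s)
    rw [Real.dist_eq, abs_of_nonpos (by linarith)] at this
    unfold gridDist
    linarith
  · by_contra hlt
    push_neg at hlt
    obtain ⟨y, ⟨m, rfl⟩, hy⟩ := (Metric.infDist_lt_iff hSne).1 hlt
    rw [Real.dist_eq, abs_lt] at hy
    beta_reduce at hy
    rcases le_or_gt m j with hm | hm
    · have hmr : (m:ℝ) ≤ (j:ℝ) := by exact_mod_cast hm
      have hmj : 2 * h * (m:ℝ) ≤ 2 * h * (j:ℝ) := by nlinarith
      linarith [hy.2]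
    · have hmr : (j:ℝ) + 1 ≤ (m:ℝ) := by exact_mod_cast hm
      have hmj : 2 * h * ((j:ℝ) + 1) ≤ 2 * h * (m:ℝ) := by nlinarith
      linarith [hy.1]

end OptRec

namespace OptRec

lemma part2 {E : Type*} [NormedAddCommGroup E] [NormedSpace ℝ E] [CompleteSpace E] [Nontrivial E]
    {ω : ℝ → ℝ} (hω : IsModulus ω) {a b : ℝ} (hab : a < b) {n : ℕ} (hn : 0 < n)
    (Φ : (Fin (n + 1) → E) → ℝ → E) (c : ℝ)
    (hc : ∀ f f' : ℝ → E, W1HHolder ω a b f f' → ∀ u ∈ Set.Icc a b,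
      ‖f' u - Φ (fun i : Fin (n + 1) => f (unifPt a b n (i : ℕ))) u‖ ≤ c) :
    ((n : ℝ) / (b - a)) * ∫ s in (0:ℝ)..((b - a) / (n : ℝ)), ω s ≤ c := by
  have hba : (0:ℝ) < b - a := by linarith
  have hn' : (0:ℝ) < n := by exact_mod_cast hn
  set h : ℝ := (b - a) / n with hh_def
  have hh : 0 < h := by positivity
  set I : ℝ := ∫ s in (0:ℝ)..h, ω s with hI_def
  have hI0 : 0 ≤ I := intervalIntegral.integral_nonneg hh.le (fun x hx => mod_nonneg hω hx.1)
  set C : ℝ := h⁻¹ * I with hC_def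
  have hC0 : 0 ≤ C := by positivity
  -- unit vector
  obtain ⟨x0, hx0⟩ := exists_ne (0 : E)
  set e : E := ‖x0‖⁻¹ • x0 with he_def
  have he : ‖e‖ = 1 := by
    rw [he_def, norm_smul, norm_inv, norm_norm, inv_mul_cancel₀ (norm_ne_zero_iff.2 hx0)]
  -- the extremal scalar functions
  set δ : ℝ → ℝ := gridDist a h with hδ_def
  have hδc : Continuous δ := gridDist_continuous a h
  set G : ℝ → ℝ := fun s => C - ω (δ s) with hG_def
  have hGc : Continuous G := continuous_const.sub
    (hω.2.1.comp_continuous hδc (fun x => mem_Ici.2 (gridDist_nonneg a h x)))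
  set g : ℝ → ℝ := fun t => ∫ x in a..t, G x with hg_def
  have hgderiv : ∀ t : ℝ, HasDerivAt g (G t) t := fun t =>
    intervalIntegral.integral_hasDerivAt_right (hGc.intervalIntegrable a t)
      (hGc.stronglyMeasurableAtFilter volume (nhds t)) hGc.continuousAt
  set f : ℝ → E := fun t => g t • e with hf_def
  set f' : ℝ → E := fun t => G t • e with hf'_def
  -- Hölder property of G
  have hGH : ∀ s t : ℝ, |G t - G s| ≤ ω |t - s| := by
    intro s t
    have h1 : G t - G s = ω (δ s) - ω (δ t) := by rw [hG_def]; ring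
    rw [h1]
    calc |ω (δ s) - ω (δ t)| ≤ ω (|δ s - δ t|) :=
          mod_abs_sub hω (gridDist_nonneg a h s) (gridDist_nonneg a h t)
      _ ≤ ω (|t - s|) := by
          apply hω.2.2.1 (mem_Ici.2 (abs_nonneg _)) (mem_Ici.2 (abs_nonneg _))
          rw [abs_sub_comm t s]
          exact gridDist_lip a h s t
  have hfH : W1HHolder ω a b f f' := by
    constructor
    · exact fun t ht => ((hgderiv t).smul_const e).hasDerivWithinAt
    · intro s _ t _
      have : f' t - f' s = (G t - G s) • e := by rw [hf'_def]; simp [sub_smul]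
      rw [this, norm_smul, he, mul_one, Real.norm_eq_abs]
      exact hGH s t
  have hfnH : W1HHolder ω a b (fun t => -(f t)) (fun t => -(f' t)) := by
    constructor
    · exact fun t ht => (((hgderiv t).smul_const e).neg).hasDerivWithinAt
    · intro s _ t _
      have : -(f' t) - -(f' s) = (G s - G t) • e := by rw [hf'_def]; simp [sub_smul]; abel
      rw [this, norm_smul, he, mul_one, Real.norm_eq_abs, abs_sub_comm]
      exact hGH s t
  -- zero at knots
  have hT : ∀ k : ℕ, unifPt a b n k = a + (k : ℝ) * h := fun k => unifPt_eq a b n k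
  have hint_interval : ∀ k : ℕ, (∫ s in (unifPt a b n k)..(unifPt a b n (k+1)), G s) = 0 := by
    intro k
    have hTk1 : unifPt a b n (k+1) - unifPt a b n k = h := unifPt_succ_sub a b n k
    have hωδc : Continuous (fun s => ω (δ s)) :=
      hω.2.1.comp_continuous hδc (fun x => mem_Ici.2 (gridDist_nonneg a h x))
    have hsplit : (∫ s in (unifPt a b n k)..(unifPt a b n (k+1)), G s)
        = (∫ _ in (unifPt a b n k)..(unifPt a b n (k+1)), C)
          - ∫ s in (unifPt a b n k)..(unifPt a b n (k+1)), ω (δ s) := by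
      rw [hG_def, intervalIntegral.integral_sub intervalIntegrable_const
        (hωδc.intervalIntegrable _ _)]
    have hconst : (∫ _ in (unifPt a b n k)..(unifPt a b n (k+1)), C) = I := by
      rw [intervalIntegral.integral_const, hTk1, smul_eq_mul, hC_def]
      field_simp
    have hωint : (∫ s in (unifPt a b n k)..(unifPt a b n (k+1)), ω (δ s)) = I := by
      have hle : unifPt a b n k ≤ unifPt a b n (k+1) := by linarith
      rcases Nat.even_or_odd k with ⟨j, hj⟩ | ⟨j, hj⟩
      · -- k = j + j : even
        have hp : unifPt a b n k = a + 2 * h * ((j:ℤ):ℝ) := by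
          rw [hT, hj]; push_cast; ring
        have hq : unifPt a b n (k+1) = a + 2 * h * ((j:ℤ):ℝ) + h := by
          rw [hT, hj]; push_cast; ring
        have hform : EqOn (fun s => ω (δ s)) (fun s => ω (s - unifPt a b n k))
            (uIcc (unifPt a b n k) (unifPt a b n (k+1))) := by
          intro s hs
          rw [uIcc_of_le hle, hp, hq] at hs
          simp only
          rw [hδ_def, gridDist_even hh (j:ℤ) hs.1 hs.2, hp]
        rw [intervalIntegral.integral_congr hform,
          intervalIntegral.integral_comp_sub_right ω (unifPt a b n k), sub_self, hTk1]
      · -- k = 2j + 1 : odd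
        have hp : unifPt a b n k = a + 2 * h * ((j:ℤ):ℝ) + h := by
          rw [hT, hj]; push_cast; ring
        have hq : unifPt a b n (k+1) = a + 2 * h * ((j:ℤ):ℝ) + 2 * h := by
          rw [hT, hj]; push_cast; ring
        have hform : EqOn (fun s => ω (δ s)) (fun s => ω (unifPt a b n (k+1) - s))
            (uIcc (unifPt a b n k) (unifPt a b n (k+1))) := by
          intro s hs
          rw [uIcc_of_le hle, hp, hq] at hs
          simp only
          rw [hδ_def, gridDist_odd hh (j:ℤ) hs.1 hs.2, hq]
        rw [intervalIntegral.integral_congr hform,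
          intervalIntegral.integral_comp_sub_left ω (unifPt a b n (k+1)), sub_self, hTk1]
    rw [hsplit, hconst, hωint]
    ring
  have hg0 : ∀ k : ℕ, k ≤ n → g (unifPt a b n k) = 0 := by
    intro k
    induction k with
    | zero =>
      intro _
      have : unifPt a b n 0 = a := by rw [hT]; push_cast; ring
      rw [hg_def]
      simp only
      rw [this, intervalIntegral.integral_same]
    | succ m ih =>
      intro hm
      have h1 : g (unifPt a b n m) = 0 := ih (by omega)
      have h2 := intervalIntegral.integral_add_adjacent_intervals (μ := volume)
        (hGc.intervalIntegrable a (unifPt a b n m))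
        (hGc.intervalIntegrable (unifPt a b n m) (unifPt a b n (m+1)))
      rw [hg_def]
      simp only
      rw [← h2, hint_interval m]
      rw [hg_def] at h1
      simp only at h1
      rw [h1]
      ring
  -- data vanishes
  have hdata : (fun i : Fin (n + 1) => f (unifPt a b n (i : ℕ))) = fun _ => (0 : E) := by
    funext i
    rw [hf_def]
    simp only
    rw [hg0 i (by omega), zero_smul]
  have hdataneg : (fun i : Fin (n + 1) => (fun t => -(f t)) (unifPt a b n (i : ℕ)))
      = fun _ => (0 : E) := by
    funext i
    simp only
    rw [hf_def]
    simp only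
    rw [hg0 i (by omega), zero_smul, neg_zero]
  -- apply the hypothesis at u = a
  have hamem : a ∈ Icc a b := ⟨le_rfl, hab.le⟩
  have h1 := hc f f' hfH a hamem
  have h2 := hc (fun t => -(f t)) (fun t => -(f' t)) hfnH a hamem
  rw [hdata] at h1
  rw [hdataneg] at h2
  have hfa : f' a = C • e := by
    rw [hf'_def]
    simp only
    rw [hG_def]
    simp only
    rw [hδ_def, gridDist_a, hω.1, sub_zero]
  have hnorm2 : ‖f' a - Φ (fun _ => (0:E)) a - (-(f' a) - Φ (fun _ => (0:E)) a)‖ = 2 * C := by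
    have : f' a - Φ (fun _ => (0:E)) a - (-(f' a) - Φ (fun _ => (0:E)) a) = (2:ℝ) • f' a := by
      rw [two_smul]; abel
    rw [this, norm_smul, hfa, norm_smul, he, Real.norm_eq_abs, Real.norm_eq_abs,
      abs_of_nonneg hC0, mul_one]
    norm_num
  have h3 := norm_sub_le (f' a - Φ (fun _ => (0:E)) a) (-(f' a) - Φ (fun _ => (0:E)) a)
  rw [hnorm2] at h3
  have hcoef : (n : ℝ) / (b - a) = h⁻¹ := by rw [hh_def, inv_div]
  rw [hcoef]
  have : (2:ℝ) * C ≤ 2 * c := by linarith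
  rw [hC_def] at this
  linarith

end OptRec


/-- Optimal recovery of the derivative on `W¹H^ω([a,b],E)` from the values of the function at
the uniform knots: the optimal error equals `(n/(b−a)) ∫_0^{(b−a)/n} ω(u) du`; it is attained by
the derivative of the interpolating polygonal line. -/
theorem optimal_recovery_derivative_values
    {E : Type*} [NormedAddCommGroup E] [NormedSpace ℝ E] [CompleteSpace E] [Nontrivial E]
    (ω : ℝ → ℝ) (hω : IsModulus ω)
    (a b : ℝ) (hab : a < b) (n : ℕ) (hn : 0 < n) :
    (∀ f f' : ℝ → E, W1HHolder ω a b f f' → ∀ u ∈ Set.Icc a b,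
        ‖f' u - polyDerivMethod a b n (fun i : Fin (n + 1) => f (unifPt a b n (i : ℕ))) u‖ ≤
          ((n : ℝ) / (b - a)) * ∫ s in (0:ℝ)..((b - a) / (n : ℝ)), ω s) ∧
    ∀ Φ : (Fin (n + 1) → E) → ℝ → E, ∀ c : ℝ,
      (∀ f f' : ℝ → E, W1HHolder ω a b f f' → ∀ u ∈ Set.Icc a b,
        ‖f' u - Φ (fun i : Fin (n + 1) => f (unifPt a b n (i : ℕ))) u‖ ≤ c) →
      ((n : ℝ) / (b - a)) * ∫ s in (0:ℝ)..((b - a) / (n : ℝ)), ω s ≤ c := by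
  constructor
  · exact fun f f' hf u hu => OptRec.part1 hω hab hn f f' hf u hu
  · exact fun Φ c hc => OptRec.part2 hω hab hn Φ c hc
end

section
/- Sharp estimate of the deviation of the derivative from a divided difference: Let ω be a modulus of continuity, E a real Banach space, and let f: [a,b] → E be differentiable with f′ ∈ H^ω([a,b],E). Let t ∈ [a,b] and h₁, h₂ ≥ 0 with h₁ + h₂ > 0 and [t − h₁, t + h₂] ⊆ [a,b]. Then, writing I(α) = ∫_0^α ω(u) du, one has ‖f′(t) − (f(t+h₂) − f(t−h₁))/(h₁+h₂)‖ ≤ (I(h₁) + I(h₂))/(h₁+h₂). -/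
open MeasureTheory Set

/-- A function in `H^ω` is continuous on `[a,b]`. -/
lemma HHolder.continuousOn {E : Type*} [NormedAddCommGroup E] {ω : ℝ → ℝ} (hω : IsModulus ω)
    {a b : ℝ} {g : ℝ → E} (hg : HHolder ω a b g) : ContinuousOn g (Set.Icc a b) := by
  intro x hx
  have hωc : Filter.Tendsto (fun s : ℝ => ω |s - x|) (nhdsWithin x (Set.Icc a b)) (nhds 0) := by
    have h1 : Filter.Tendsto (fun s : ℝ => |s - x|) (nhdsWithin x (Set.Icc a b))
        (nhdsWithin 0 (Set.Ici 0)) := by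
      apply Filter.Tendsto.mono_left _ nhdsWithin_le_nhds
      apply tendsto_nhdsWithin_of_tendsto_nhds_of_eventually_within
      · have : Continuous fun s : ℝ => |s - x| := (continuous_id.sub continuous_const).abs
        simpa using this.tendsto x
      · exact Filter.Eventually.of_forall fun s => Set.mem_Ici.2 (abs_nonneg _)
    have h2 := (hω.2.1 0 Set.self_mem_Ici).tendsto
    rw [hω.1] at h2
    exact h2.comp h1
  have key : Filter.Tendsto (fun s => g s - g x) (nhdsWithin x (Set.Icc a b)) (nhds 0) := by
    apply squeeze_zero_norm' _ hωc
    filter_upwards [self_mem_nhdsWithin] with s hs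
    exact hg x hx s hs
  have h3 : Filter.Tendsto (fun s => g s - g x + g x) (nhdsWithin x (Set.Icc a b))
      (nhds (0 + g x)) := key.add tendsto_const_nhds
  simpa [ContinuousWithinAt] using h3

/-- Sharp estimate of the deviation of the derivative from a divided difference for functions
with derivative in `H^ω([a,b],E)`. -/
theorem deriv_divided_difference_deviation
    {E : Type*} [NormedAddCommGroup E] [NormedSpace ℝ E] [CompleteSpace E]
    (ω : ℝ → ℝ) (hω : IsModulus ω)
    (a b : ℝ) (hab : a ≤ b) (f f' : ℝ → E)
    (hdiff : ∀ u ∈ Set.Icc a b, HasDerivWithinAt f (f' u) (Set.Icc a b) u)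
    (hf' : HHolder ω a b f')
    (t h₁ h₂ : ℝ) (hh₁ : 0 ≤ h₁) (hh₂ : 0 ≤ h₂) (hpos : 0 < h₁ + h₂)
    (hleft : a ≤ t - h₁) (hright : t + h₂ ≤ b) :
    ‖f' t - (h₁ + h₂)⁻¹ • (f (t + h₂) - f (t - h₁))‖ ≤
      ((∫ u in (0:ℝ)..h₁, ω u) + ∫ u in (0:ℝ)..h₂, ω u) / (h₁ + h₂) := by
  set c := t - h₁ with hc
  set d := t + h₂ with hd
  have hcd : c ≤ d := by simp [hc, hd]; linarith
  have hsub : Set.Icc c d ⊆ Set.Icc a b := Set.Icc_subset_Icc hleft hright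
  have ht : t ∈ Set.Icc a b := ⟨by linarith, by linarith⟩
  have hcont : ContinuousOn f' (Set.Icc a b) := hf'.continuousOn hω
  have hint : IntervalIntegrable f' volume c d :=
    (hcont.mono hsub).intervalIntegrable_of_Icc hcd
  -- FTC
  have hftc : ∫ s in c..d, f' s = f d - f c := by
    apply intervalIntegral.integral_eq_sub_of_hasDeriv_right_of_le hcd
    · exact fun s hs => ((hdiff s (hsub hs)).continuousWithinAt).mono hsub
    · intro s hs
      have hs' : s ∈ Set.Ioo a b := ⟨lt_of_le_of_lt hleft hs.1, lt_of_lt_of_le hs.2 hright⟩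
      have := (hdiff s (hsub (Set.mem_Icc_of_Ioo hs))).hasDerivAt
        (Icc_mem_nhds hs'.1 hs'.2)
      exact this.hasDerivWithinAt
    · exact hint
  -- bound function integrability
  have habs : Continuous fun s : ℝ => |t - s| := (continuous_const.sub continuous_id).abs
  have hωcont : ContinuousOn (fun s => ω |t - s|) (Set.Icc c d) :=
    ContinuousOn.comp hω.2.1 habs.continuousOn fun s _ => Set.mem_Ici.2 (abs_nonneg _)
  have hωint : IntervalIntegrable (fun s => ω |t - s|) volume c d :=
    hωcont.intervalIntegrable_of_Icc hcd
  -- main rewrite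
  have hL : (0:ℝ) < d - c := by simp [hc, hd]; linarith
  have key : f' t - (h₁ + h₂)⁻¹ • (f d - f c)
      = (d - c)⁻¹ • ∫ s in c..d, (f' t - f' s) := by
    have hdc : d - c = h₁ + h₂ := by simp [hc, hd]; ring
    rw [intervalIntegral.integral_sub (intervalIntegrable_const) hint,
      intervalIntegral.integral_const, hftc, hdc,
      smul_sub ((h₁ + h₂)⁻¹) ((h₁ + h₂) • f' t), smul_smul,
      inv_mul_cancel₀ hpos.ne', one_smul]
  rw [key]
  have hbound : ‖∫ s in c..d, (f' t - f' s)‖ ≤ ∫ s in c..d, ω |t - s| := by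
    have := intervalIntegral.norm_integral_le_abs_of_norm_le (μ := volume)
      (f := fun s => f' t - f' s) (g := fun s => ω |t - s|) ?_ hωint
    · refine this.trans (le_of_eq (abs_of_nonneg ?_))
      apply intervalIntegral.integral_nonneg hcd
      intro s _
      have : ω 0 ≤ ω |t - s| := hω.2.2.1 Set.self_mem_Ici (Set.mem_Ici.2 (abs_nonneg _)) (abs_nonneg _)
      rw [hω.1] at this; exact this
    · apply (ae_restrict_iff' measurableSet_uIoc).2
      apply Filter.Eventually.of_forall
      intro s hs
      rw [Set.uIoc_of_le hcd] at hs
      exact hf' s (hsub ⟨le_of_lt hs.1, hs.2⟩) t ht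
  -- compute the ω integral
  have hsplit : ∫ s in c..d, ω |t - s|
      = (∫ u in (0:ℝ)..h₁, ω u) + ∫ u in (0:ℝ)..h₂, ω u := by
    have htmem : t ∈ Set.Icc c d := ⟨by simp [hc]; linarith, by simp [hd]; linarith⟩
    rw [← intervalIntegral.integral_add_adjacent_intervals
      (hωint.mono_set (Set.uIcc_subset_uIcc_left (Set.mem_uIcc_of_le htmem.1 htmem.2)))
      (hωint.mono_set (Set.uIcc_subset_uIcc_right (Set.mem_uIcc_of_le htmem.1 htmem.2)))]
    congr 1
    · have : ∀ s ∈ Set.uIcc c t, ω |t - s| = ω (t - s) := by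
        intro s hs
        rw [Set.uIcc_of_le htmem.1] at hs
        rw [abs_of_nonneg (by linarith [hs.2])]
      rw [intervalIntegral.integral_congr this, intervalIntegral.integral_comp_sub_left ω t]
      simp [hc]
    · have : ∀ s ∈ Set.uIcc t d, ω |t - s| = ω (s - t) := by
        intro s hs
        rw [Set.uIcc_of_le htmem.2] at hs
        rw [abs_sub_comm, abs_of_nonneg (by linarith [hs.1])]
      rw [intervalIntegral.integral_congr this, intervalIntegral.integral_comp_sub_right ω t]
      simp [hd]
  rw [norm_smul, Real.norm_eq_abs, abs_of_nonneg (inv_nonneg.2 (le_of_lt hL))]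
  have hdc : d - c = h₁ + h₂ := by simp [hc, hd]; ring
  rw [hdc, div_eq_inv_mul]
  exact mul_le_mul_of_nonneg_left (hbound.trans (le_of_eq hsplit))
    (inv_nonneg.2 (le_of_lt hpos))
end

section
/- Landau-type inequality for the derivative via the uniform norm of the function: Let ω be a modulus of continuity, E a real Banach space, and let f: [a,b] → E be continuously differentiable with K := sup_{t'≠t''∈[a,b]} ‖f′(t′) − f′(t″)‖ / ω(|t′ − t″|) < ∞. Let t ∈ [a,b] and h₁, h₂ ≥ 0 with h₁ + h₂ > 0 and [t − h₁, t + h₂] ⊆ [a,b]. Then, writing I(α) = ∫_0^α ω(u) du, one has ‖f′(t)‖ ≤ ((I(h₁) + I(h₂))/(h₁+h₂))·K + (2/(h₁+h₂))·sup_{u∈[a,b]} ‖f(u)‖. -/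
open MeasureTheory Set

/-- Landau-type inequality: the norm of the derivative at a point is estimated via the
`ω`-seminorm of the derivative and the uniform norm of the function. -/
theorem landau_inequality
    {E : Type*} [NormedAddCommGroup E] [NormedSpace ℝ E] [CompleteSpace E]
    (ω : ℝ → ℝ) (hω : IsModulus ω)
    (a b : ℝ) (hab : a ≤ b) (f f' : ℝ → E)
    (hdiff : ∀ u ∈ Set.Icc a b, HasDerivWithinAt f (f' u) (Set.Icc a b) u)
    (hcont : ContinuousOn f' (Set.Icc a b))
    (K : ℝ) (hK0 : 0 ≤ K)
    (hK : ∀ s ∈ Set.Icc a b, ∀ u ∈ Set.Icc a b, ‖f' s - f' u‖ ≤ K * ω |s - u|)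
    (M : ℝ) (hM : ∀ u ∈ Set.Icc a b, ‖f u‖ ≤ M)
    (t h₁ h₂ : ℝ) (hh₁ : 0 ≤ h₁) (hh₂ : 0 ≤ h₂) (hpos : 0 < h₁ + h₂)
    (hleft : a ≤ t - h₁) (hright : t + h₂ ≤ b) :
    ‖f' t‖ ≤
      (((∫ u in (0:ℝ)..h₁, ω u) + ∫ u in (0:ℝ)..h₂, ω u) / (h₁ + h₂)) * K +
        (2 / (h₁ + h₂)) * M := by
  obtain ⟨hω0, hωc, hωm, hωsub⟩ := hω
  have h1 : t - h₁ ≤ t := by linarith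
  have h2 : t ≤ t + h₂ := by linarith
  have h12 : t - h₁ ≤ t + h₂ := by linarith
  have hsub : Set.Icc (t - h₁) (t + h₂) ⊆ Set.Icc a b := Set.Icc_subset_Icc hleft hright
  have htmem : t ∈ Set.Icc a b := ⟨by linarith, by linarith⟩
  have hfc : ContinuousOn f (Set.Icc a b) := fun u hu => (hdiff u hu).continuousWithinAt
  -- continuity of u ↦ ω |t - u|
  have habs : ContinuousOn (fun u : ℝ => ω |t - u|) (Set.Icc (t - h₁) (t + h₂)) := by
    have h : Continuous fun u : ℝ => |t - u| := (continuous_const.sub continuous_id).abs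
    exact hωc.comp h.continuousOn (fun u _ => Set.mem_Ici.mpr (abs_nonneg _))
  -- interval integrabilities
  have hintf' : IntervalIntegrable f' volume (t - h₁) (t + h₂) := by
    apply ContinuousOn.intervalIntegrable
    rw [Set.uIcc_of_le h12]; exact hcont.mono hsub
  have hintc : IntervalIntegrable (fun _ : ℝ => f' t) volume (t - h₁) (t + h₂) :=
    intervalIntegrable_const
  have hintd : IntervalIntegrable (fun u => f' t - f' u) volume (t - h₁) (t + h₂) :=
    hintc.sub hintf'
  have hintω : IntervalIntegrable (fun u : ℝ => ω |t - u|) volume (t - h₁) (t + h₂) := by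
    apply ContinuousOn.intervalIntegrable
    rw [Set.uIcc_of_le h12]; exact habs
  -- FTC
  have hftc : (∫ u in (t - h₁)..(t + h₂), f' u) = f (t + h₂) - f (t - h₁) := by
    apply intervalIntegral.integral_eq_sub_of_hasDeriv_right_of_le h12 (hfc.mono hsub) _ hintf'
    intro x hx
    have hxm : x ∈ Set.Icc a b := hsub (Set.Ioo_subset_Icc_self hx)
    have hx1 := hx.1; have hx2 := hx.2
    have : HasDerivAt f (f' x) x :=
      (hdiff x hxm).hasDerivAt (Icc_mem_nhds (by linarith) (by linarith))
    exact this.hasDerivWithinAt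
  -- key identity
  have key : (h₁ + h₂) • f' t - (f (t + h₂) - f (t - h₁))
      = ∫ u in (t - h₁)..(t + h₂), (f' t - f' u) := by
    rw [intervalIntegral.integral_sub hintc hintf', intervalIntegral.integral_const, hftc]
    have : t + h₂ - (t - h₁) = h₁ + h₂ := by ring
    rw [this]
  -- pointwise bound and integral comparison
  have hnormint : (∫ u in (t - h₁)..(t + h₂), ‖f' t - f' u‖)
      ≤ ∫ u in (t - h₁)..(t + h₂), K * ω |t - u| := by
    apply intervalIntegral.integral_mono_on h12 hintd.norm (hintω.const_mul K)
    intro u hu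
    exact hK t htmem u (hsub hu)
  -- computing the ω integral
  have e1 : (∫ u in (t - h₁)..t, ω |t - u|) = ∫ u in (0:ℝ)..h₁, ω u := by
    have : (∫ u in (t - h₁)..t, ω |t - u|) = ∫ u in (t - h₁)..t, ω (t - u) := by
      apply intervalIntegral.integral_congr
      intro u hu
      rw [Set.uIcc_of_le h1] at hu
      show ω |t - u| = ω (t - u)
      rw [abs_of_nonneg (by linarith [hu.2])]
    rw [this, intervalIntegral.integral_comp_sub_left (fun u => ω u) t]
    norm_num
  have e2 : (∫ u in t..(t + h₂), ω |t - u|) = ∫ u in (0:ℝ)..h₂, ω u := by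
    have : (∫ u in t..(t + h₂), ω |t - u|) = ∫ u in t..(t + h₂), ω (u - t) := by
      apply intervalIntegral.integral_congr
      intro u hu
      rw [Set.uIcc_of_le h2] at hu
      show ω |t - u| = ω (u - t)
      rw [abs_sub_comm, abs_of_nonneg (by linarith [hu.1])]
    rw [this, intervalIntegral.integral_comp_sub_right (fun u => ω u) t]
    norm_num
  have esplit : (∫ u in (t - h₁)..(t + h₂), ω |t - u|)
      = (∫ u in (0:ℝ)..h₁, ω u) + ∫ u in (0:ℝ)..h₂, ω u := by
    rw [← e1, ← e2]
    exact (intervalIntegral.integral_add_adjacent_intervals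
      (hintω.mono_set (by rw [Set.uIcc_of_le h1, Set.uIcc_of_le h12]; exact Set.Icc_subset_Icc_right h2))
      (hintω.mono_set (by rw [Set.uIcc_of_le h2, Set.uIcc_of_le h12]; exact Set.Icc_subset_Icc_left (by linarith)))).symm
  -- norm bound for the integral
  have hbound : ‖∫ u in (t - h₁)..(t + h₂), (f' t - f' u)‖
      ≤ K * ((∫ u in (0:ℝ)..h₁, ω u) + ∫ u in (0:ℝ)..h₂, ω u) := by
    calc ‖∫ u in (t - h₁)..(t + h₂), (f' t - f' u)‖
        ≤ ∫ u in (t - h₁)..(t + h₂), ‖f' t - f' u‖ :=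
          intervalIntegral.norm_integral_le_integral_norm h12
      _ ≤ ∫ u in (t - h₁)..(t + h₂), K * ω |t - u| := hnormint
      _ = K * ((∫ u in (0:ℝ)..h₁, ω u) + ∫ u in (0:ℝ)..h₂, ω u) := by
          rw [intervalIntegral.integral_const_mul, esplit]
  -- endpoint bound
  have hfb : ‖f (t + h₂) - f (t - h₁)‖ ≤ 2 * M := by
    have h3 := hM (t + h₂) ⟨by linarith, hright⟩
    have h4 := hM (t - h₁) ⟨hleft, by linarith⟩
    calc ‖f (t + h₂) - f (t - h₁)‖ ≤ ‖f (t + h₂)‖ + ‖f (t - h₁)‖ := norm_sub_le _ _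
      _ ≤ 2 * M := by linarith
  -- main inequality
  have main : (h₁ + h₂) * ‖f' t‖
      ≤ K * ((∫ u in (0:ℝ)..h₁, ω u) + ∫ u in (0:ℝ)..h₂, ω u) + 2 * M := by
    have : (h₁ + h₂) • f' t = (∫ u in (t - h₁)..(t + h₂), (f' t - f' u))
        + (f (t + h₂) - f (t - h₁)) := by
      rw [← key]; abel
    have hn : ‖(h₁ + h₂) • f' t‖ = (h₁ + h₂) * ‖f' t‖ := by
      rw [norm_smul, Real.norm_of_nonneg (le_of_lt hpos)]
    calc (h₁ + h₂) * ‖f' t‖ = ‖(h₁ + h₂) • f' t‖ := hn.symm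
      _ ≤ ‖∫ u in (t - h₁)..(t + h₂), (f' t - f' u)‖ + ‖f (t + h₂) - f (t - h₁)‖ := by
          rw [this]; exact norm_add_le _ _
      _ ≤ K * ((∫ u in (0:ℝ)..h₁, ω u) + ∫ u in (0:ℝ)..h₂, ω u) + 2 * M := by
          linarith
  have : ((∫ u in (0:ℝ)..h₁, ω u) + ∫ u in (0:ℝ)..h₂, ω u) / (h₁ + h₂) * K + 2 / (h₁ + h₂) * M
      = (K * ((∫ u in (0:ℝ)..h₁, ω u) + ∫ u in (0:ℝ)..h₂, ω u) + 2 * M) / (h₁ + h₂) := by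
    field_simp
  rw [this, le_div_iff₀ hpos]
  linarith
end

section
/- Stechkin-type theorem on approximation of the differentiation operator by bounded operators: Let ω be a modulus of continuity, E a nontrivial real Banach space, a < b, t ∈ [a,b], h > 0; set h₁ = min{h, t−a}, h₂ = min{h, b−t}, I(α) = ∫_0^α ω(u) du, and N = 2/(h₁+h₂). Then: (i) for every map T from C([a,b],E) to E satisfying ‖T(g)‖ ≤ N·sup_{u∈[a,b]}‖g(u)‖ for all g ∈ C([a,b],E), one has sup_{f ∈ W^1H^ω([a,b],E)} ‖f′(t) − T(f)‖ ≥ (I(h₁) + I(h₂))/(h₁+h₂); (ii) the divided-difference operator T*(g) = (g(t+h₂) − g(t−h₁))/(h₁+h₂) satisfies ‖T*(g)‖ ≤ N·sup_{u∈[a,b]}‖g(u)‖ and sup_{f ∈ W^1H^ω([a,b],E)} ‖f′(t) − T*(f)‖ = (I(h₁) + I(h₂))/(h₁+h₂). Consequently, the best approximation of the operator f ↦ f′(t) on W^1H^ω([a,b],E) by operators of norm at most N equals (I(h₁) + I(h₂))/(h₁+h₂) and is attained at T*. -/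
open MeasureTheory Set intervalIntegral

lemma modulus_nonneg {ω : ℝ → ℝ} (hω : IsModulus ω) {x : ℝ} (hx : 0 ≤ x) : 0 ≤ ω x := by
  have := hω.2.2.1 (Set.mem_Ici.2 le_rfl) (Set.mem_Ici.2 hx) hx
  rw [hω.1] at this; exact this

lemma modulus_abs_sub {ω : ℝ → ℝ} (hω : IsModulus ω) {x y : ℝ} (hx : 0 ≤ x) (hy : 0 ≤ y) :
    |ω x - ω y| ≤ ω |x - y| := by
  have key : ∀ x y : ℝ, 0 ≤ x → 0 ≤ y → y ≤ x → |ω x - ω y| ≤ ω |x - y| := by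
    intro x y hx hy hxy
    have h1 : ω x ≤ ω y + ω (x - y) := by
      have := hω.2.2.2 y (x - y) hy (by linarith)
      simpa [add_sub_cancel] using this
    have h2 : ω y ≤ ω x := hω.2.2.1 (Set.mem_Ici.2 hy) (Set.mem_Ici.2 hx) hxy
    rw [abs_of_nonneg (by linarith : (0:ℝ) ≤ ω x - ω y),
        abs_of_nonneg (by linarith : (0:ℝ) ≤ x - y)]
    linarith
  rcases le_total y x with hxy | hxy
  · exact key x y hx hy hxy
  · rw [abs_sub_comm (ω x), abs_sub_comm x]
    exact key y x hy hx hxy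

lemma modulus_phi_holder {ω : ℝ → ℝ} (hω : IsModulus ω) (t : ℝ) (u v : ℝ) :
    |ω (|t - u|) - ω (|t - v|)| ≤ ω |u - v| := by
  refine (modulus_abs_sub hω (abs_nonneg _) (abs_nonneg _)).trans ?_
  refine hω.2.2.1 (Set.mem_Ici.2 (abs_nonneg _)) (Set.mem_Ici.2 (abs_nonneg _)) ?_
  have hkey := abs_abs_sub_abs_le_abs_sub (t - u) (t - v)
  rw [show (t - u) - (t - v) = -(u - v) by ring, abs_neg] at hkey
  exact hkey

lemma modulus_tendsto_zero {ω : ℝ → ℝ} (hω : IsModulus ω) {α : Type*} {l : Filter α}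
    {g : α → ℝ} (hg : Filter.Tendsto g l (nhds 0)) (hg0 : ∀ x, 0 ≤ g x) :
    Filter.Tendsto (fun x => ω (g x)) l (nhds 0) := by
  have h1 : Filter.Tendsto g l (nhdsWithin 0 (Set.Ici 0)) :=
    tendsto_nhdsWithin_iff.2 ⟨hg, Filter.Eventually.of_forall hg0⟩
  have := (hω.2.1 0 (Set.mem_Ici.2 le_rfl)).tendsto.comp h1
  rwa [hω.1] at this

/-- A function satisfying a global `ω`-Hölder bound is continuous. -/
lemma holder_continuous {E : Type*} [NormedAddCommGroup E] {ω : ℝ → ℝ} (hω : IsModulus ω)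
    {g : ℝ → E} (hg : ∀ u v : ℝ, ‖g u - g v‖ ≤ ω |u - v|) : Continuous g := by
  rw [continuous_iff_continuousAt]
  intro x
  rw [ContinuousAt, tendsto_iff_norm_sub_tendsto_zero]
  have hωt : Filter.Tendsto (fun u => ω |u - x|) (nhds x) (nhds 0) := by
    refine modulus_tendsto_zero hω ?_ (fun u => abs_nonneg _)
    have : Filter.Tendsto (fun u : ℝ => |u - x|) (nhds x) (nhds |x - x|) :=
      (continuous_abs.comp (continuous_id.sub continuous_const)).tendsto x
    simpa using this
  exact squeeze_zero_norm (fun u => by simpa using hg u x) hωt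

lemma holder_continuousOn {E : Type*} [NormedAddCommGroup E] {ω : ℝ → ℝ} (hω : IsModulus ω)
    {g : ℝ → E} {s : Set ℝ} (hg : ∀ u ∈ s, ∀ v ∈ s, ‖g u - g v‖ ≤ ω |u - v|) :
    ContinuousOn g s := by
  intro x hx
  rw [ContinuousWithinAt, tendsto_iff_norm_sub_tendsto_zero]
  have hωt : Filter.Tendsto (fun u => ω |u - x|) (nhdsWithin x s) (nhds 0) := by
    refine modulus_tendsto_zero hω ?_ (fun u => abs_nonneg _)
    have : Filter.Tendsto (fun u : ℝ => |u - x|) (nhds x) (nhds |x - x|) :=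
      (continuous_abs.comp (continuous_id.sub continuous_const)).tendsto x
    simp only [sub_self, abs_zero] at this
    exact this.mono_left nhdsWithin_le_nhds
  refine squeeze_zero_norm' ?_ hωt
  filter_upwards [self_mem_nhdsWithin] with u hu
  simpa using hg u hu x hx

lemma integral_omega_abs {ω : ℝ → ℝ} (hω : IsModulus ω) (t h₁ h₂ : ℝ)
    (h1 : 0 ≤ h₁) (h2 : 0 ≤ h₂) :
    ∫ s in (t - h₁)..(t + h₂), ω |t - s| =
      (∫ u in (0:ℝ)..h₁, ω u) + ∫ u in (0:ℝ)..h₂, ω u := by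
  have hc : Continuous fun s => ω |t - s| := by
    refine holder_continuous hω (g := fun s => ω |t - s|) ?_
    intro u v
    simpa [Real.norm_eq_abs] using modulus_phi_holder hω t u v
  have hi1 : IntervalIntegrable (fun s => ω |t - s|) volume (t - h₁) t :=
    hc.intervalIntegrable _ _
  have hi2 : IntervalIntegrable (fun s => ω |t - s|) volume t (t + h₂) :=
    hc.intervalIntegrable _ _
  rw [← integral_add_adjacent_intervals hi1 hi2]
  have e1 : ∫ s in (t - h₁)..t, ω |t - s| = ∫ u in (0:ℝ)..h₁, ω u := by
    rw [integral_congr (g := fun s => ω (t - s)) ?_]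
    · rw [integral_comp_sub_left (fun u => ω u) t]
      norm_num
    · intro s hs
      rw [Set.uIcc_of_le (by linarith : t - h₁ ≤ t)] at hs
      show ω |t - s| = ω (t - s)
      rw [abs_of_nonneg (by linarith [hs.2] : (0:ℝ) ≤ t - s)]
  have e2 : ∫ s in t..(t + h₂), ω |t - s| = ∫ u in (0:ℝ)..h₂, ω u := by
    rw [integral_congr (g := fun s => ω (s - t)) ?_]
    · rw [integral_comp_sub_right (fun u => ω u) t]
      norm_num
    · intro s hs
      rw [Set.uIcc_of_le (by linarith : t ≤ t + h₂)] at hs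
      show ω |t - s| = ω (s - t)
      rw [abs_sub_comm, abs_of_nonneg (by linarith [hs.1] : (0:ℝ) ≤ s - t)]
  rw [e1, e2]

lemma W1H_deriv_continuousOn {E : Type*} [NormedAddCommGroup E] [NormedSpace ℝ E]
    {ω : ℝ → ℝ} {a b : ℝ} {f f' : ℝ → E} (hω : IsModulus ω) (hW : W1HHolder ω a b f f') :
    ContinuousOn f' (Set.Icc a b) :=
  holder_continuousOn hω (fun u hu v hv => hW.2 v hv u hu)

lemma W1H_ftc {E : Type*} [NormedAddCommGroup E] [NormedSpace ℝ E] [CompleteSpace E]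
    {ω : ℝ → ℝ} {a b : ℝ} {f f' : ℝ → E} (hω : IsModulus ω) (hW : W1HHolder ω a b f f')
    {c d : ℝ} (hc : c ∈ Set.Icc a b) (hd : d ∈ Set.Icc a b) (hcd : c ≤ d) :
    ∫ s in c..d, f' s = f d - f c := by
  apply integral_eq_sub_of_hasDeriv_right_of_le hcd
  · intro x hx
    exact ((hW.1 x ⟨hc.1.trans hx.1, hx.2.trans hd.2⟩).continuousWithinAt).mono
      (Set.Icc_subset_Icc hc.1 hd.2)
  · intro x hx
    have hx' : x ∈ Set.Ioo a b := ⟨lt_of_le_of_lt hc.1 hx.1, lt_of_lt_of_le hx.2 hd.2⟩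
    exact (((hW.1 x (Set.Ioo_subset_Icc_self hx')).hasDerivAt
      (Icc_mem_nhds hx'.1 hx'.2))).hasDerivWithinAt
  · refine ((W1H_deriv_continuousOn hω hW).mono ?_).intervalIntegrable
    rw [Set.uIcc_of_le hcd]
    exact Set.Icc_subset_Icc hc.1 hd.2

lemma stechkin_upper {E : Type*} [NormedAddCommGroup E] [NormedSpace ℝ E] [CompleteSpace E]
    {ω : ℝ → ℝ} (hω : IsModulus ω) {a b t h₁ h₂ : ℝ}
    (h1 : 0 ≤ h₁) (h2 : 0 ≤ h₂) (hp : 0 < h₁ + h₂) (hta : a ≤ t - h₁) (htb : t + h₂ ≤ b)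
    (f f' : ℝ → E) (hW : W1HHolder ω a b f f') :
    ‖f' t - (h₁ + h₂)⁻¹ • (f (t + h₂) - f (t - h₁))‖ ≤
      ((∫ u in (0:ℝ)..h₁, ω u) + ∫ u in (0:ℝ)..h₂, ω u) / (h₁ + h₂) := by
  have hm1 : t - h₁ ∈ Set.Icc a b := ⟨hta, by linarith⟩
  have hm2 : t + h₂ ∈ Set.Icc a b := ⟨by linarith, htb⟩
  have hmt : t ∈ Set.Icc a b := ⟨by linarith, by linarith⟩
  have hftc : ∫ s in (t - h₁)..(t + h₂), f' s = f (t + h₂) - f (t - h₁) :=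
    W1H_ftc hω hW hm1 hm2 (by linarith)
  have hint : IntervalIntegrable f' volume (t - h₁) (t + h₂) := by
    refine ((W1H_deriv_continuousOn hω hW).mono ?_).intervalIntegrable
    rw [Set.uIcc_of_le (by linarith : t - h₁ ≤ t + h₂)]
    exact Set.Icc_subset_Icc hta htb
  have hφc : Continuous fun s => ω |t - s| :=
    holder_continuous hω (fun u v => by
      simpa [Real.norm_eq_abs] using modulus_phi_holder hω t u v)
  have hid : f' t - (h₁ + h₂)⁻¹ • (f (t + h₂) - f (t - h₁)) =
      (h₁ + h₂)⁻¹ • (∫ s in (t - h₁)..(t + h₂), (f' t - f' s)) := by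
    rw [integral_sub intervalIntegrable_const hint, intervalIntegral.integral_const, hftc,
      show t + h₂ - (t - h₁) = h₁ + h₂ by ring,
      smul_sub ((h₁ + h₂)⁻¹) ((h₁ + h₂) • f' t) (f (t + h₂) - f (t - h₁)),
      inv_smul_smul₀ hp.ne']
  rw [hid, norm_smul, Real.norm_eq_abs, abs_of_pos (inv_pos.2 hp)]
  have hbound : ‖∫ s in (t - h₁)..(t + h₂), (f' t - f' s)‖ ≤
      |(∫ s in (t - h₁)..(t + h₂), ω |t - s|)| := by
    refine norm_integral_le_abs_of_norm_le ?_ (hφc.intervalIntegrable _ _)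
    refine MeasureTheory.ae_restrict_of_forall_mem measurableSet_uIoc ?_
    intro s hs
    rw [Set.uIoc_of_le (by linarith : t - h₁ ≤ t + h₂)] at hs
    have hs' : s ∈ Set.Icc a b := ⟨by linarith [hs.1], by linarith [hs.2]⟩
    exact hW.2 s hs' t hmt
  have habs : |(∫ s in (t - h₁)..(t + h₂), ω |t - s|)| =
      (∫ u in (0:ℝ)..h₁, ω u) + ∫ u in (0:ℝ)..h₂, ω u := by
    rw [abs_of_nonneg (integral_nonneg (by linarith : t - h₁ ≤ t + h₂)
      (fun u _ => modulus_nonneg hω (abs_nonneg _))),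
      integral_omega_abs hω t h₁ h₂ h1 h2]
  rw [habs] at hbound
  rw [div_eq_inv_mul]
  exact mul_le_mul_of_nonneg_left hbound (inv_nonneg.2 hp.le)

lemma stechkin_lower {E : Type*} [NormedAddCommGroup E] [NormedSpace ℝ E] [Nontrivial E]
    {ω : ℝ → ℝ} (hω : IsModulus ω) {a b t h₁ h₂ : ℝ}
    (h1 : 0 ≤ h₁) (h2 : 0 ≤ h₂) (hp : 0 < h₁ + h₂) (hta : a ≤ t - h₁) (htb : t + h₂ ≤ b)
    (hL : a < t - h₁ → h₂ ≤ h₁) (hR : t + h₂ < b → h₁ ≤ h₂)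
    (T : (ℝ → E) → E)
    (hT : ∀ g : ℝ → E, ContinuousOn g (Set.Icc a b) → ∀ C : ℝ,
        (∀ u ∈ Set.Icc a b, ‖g u‖ ≤ C) → ‖T g‖ ≤ (2 / (h₁ + h₂)) * C)
    (c : ℝ) (hc : ∀ f f' : ℝ → E, W1HHolder ω a b f f' → ‖f' t - T f‖ ≤ c) :
    ((∫ u in (0:ℝ)..h₁, ω u) + ∫ u in (0:ℝ)..h₂, ω u) / (h₁ + h₂) ≤ c := by
  obtain ⟨x, hx⟩ := exists_ne (0 : E)
  set e : E := ‖x‖⁻¹ • x with he_def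
  have he : ‖e‖ = 1 := by
    rw [he_def, norm_smul, norm_inv, norm_norm, inv_mul_cancel₀ (norm_ne_zero_iff.2 hx)]
  have hmono : ∀ x y : ℝ, 0 ≤ x → x ≤ y → ω x ≤ ω y := fun x y hx0 hxy =>
    hω.2.2.1 (Set.mem_Ici.2 hx0) (Set.mem_Ici.2 (hx0.trans hxy)) hxy
  set D := ω (max h₁ h₂) with hD
  have hD0 : 0 ≤ D := modulus_nonneg hω (le_trans h1 (le_max_left _ _))
  set ψ : ℝ → ℝ := fun s => max 0 (D - ω |t - s|) with hψdef
  have hφc : Continuous fun s => ω |t - s| :=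
    holder_continuous hω (fun u v => by
      simpa [Real.norm_eq_abs] using modulus_phi_holder hω t u v)
  have hψc : Continuous ψ := continuous_const.max (continuous_const.sub hφc)
  have hψnn : ∀ s, 0 ≤ ψ s := fun s => le_max_left _ _
  have hψint : ∀ c d : ℝ, IntervalIntegrable ψ volume c d := fun c d =>
    hψc.intervalIntegrable _ _
  set F : ℝ → ℝ := fun s => ∫ u in (t - h₁)..s, ψ u with hFdef
  have hF : ∀ s, HasDerivAt F (ψ s) s := fun s =>
    (hψc.integral_hasStrictDerivAt (t - h₁) s).hasDerivAt
  have hψt : ψ t = D := by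
    rw [hψdef]
    simp only [sub_self, abs_zero, hω.1, sub_zero]
    exact max_eq_right hD0
  have noclip : ∀ s ∈ Set.Icc (t - h₁) (t + h₂), ψ s = D - ω |t - s| := by
    intro s hs
    have habs : |t - s| ≤ max h₁ h₂ := by
      rw [abs_le]
      constructor
      · have := le_max_right h₁ h₂; linarith [hs.2]
      · have := le_max_left h₁ h₂; linarith [hs.1]
    have hle : ω |t - s| ≤ D := hmono _ _ (abs_nonneg _) habs
    rw [hψdef]
    exact max_eq_right (by linarith)
  have hzero_left : ∀ s, a ≤ s → s ≤ t - h₁ → F s = 0 := by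
    intro s has hst
    rcases eq_or_lt_of_le hst with heq | hlt
    · show (∫ u in (t - h₁)..s, ψ u) = 0
      rw [heq, intervalIntegral.integral_same]
    · have hD' : D = ω h₁ := by
        rw [hD, max_eq_left (hL (by linarith))]
      have hz : ∀ u ∈ Set.uIcc s (t - h₁), ψ u = 0 := by
        intro u hu
        rw [Set.uIcc_of_le hst] at hu
        have h1u : h₁ ≤ t - u := by linarith [hu.2]
        have : ω h₁ ≤ ω |t - u| := by
          rw [abs_of_nonneg (by linarith)]
          exact hmono _ _ h1 h1u
        rw [hψdef]
        exact max_eq_left (by rw [← hD'] at this; linarith)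
      show (∫ u in (t - h₁)..s, ψ u) = 0
      rw [intervalIntegral.integral_symm, intervalIntegral.integral_congr hz,
        intervalIntegral.integral_zero, neg_zero]
  have hconst_right : ∀ s, t + h₂ ≤ s → s ≤ b → F s = F (t + h₂) := by
    intro s hst hsb
    rcases eq_or_lt_of_le hst with heq | hlt
    · rw [← heq]
    · have hD' : D = ω h₂ := by
        rw [hD, max_eq_right (hR (by linarith))]
      have hz : ∀ u ∈ Set.uIcc (t + h₂) s, ψ u = 0 := by
        intro u hu
        rw [Set.uIcc_of_le hst] at hu
        have h2u : h₂ ≤ u - t := by linarith [hu.1]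
        have : ω h₂ ≤ ω |t - u| := by
          rw [abs_sub_comm, abs_of_nonneg (by linarith)]
          exact hmono _ _ h2 h2u
        rw [hψdef]
        exact max_eq_left (by rw [← hD'] at this; linarith)
      have hsplit : F (t + h₂) + ∫ u in (t + h₂)..s, ψ u = F s :=
        intervalIntegral.integral_add_adjacent_intervals (hψint _ _) (hψint _ _)
      have : (∫ u in (t + h₂)..s, ψ u) = 0 := by
        rw [intervalIntegral.integral_congr hz, intervalIntegral.integral_zero]
      linarith [hsplit]
  have hF0 : ∀ s ∈ Set.Icc a b, 0 ≤ F s := by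
    intro s hs
    rcases le_or_gt s (t - h₁) with h' | h'
    · rw [hzero_left s hs.1 h']
    · exact intervalIntegral.integral_nonneg (by linarith) (fun u _ => hψnn u)
  have hFle : ∀ s ∈ Set.Icc a b, F s ≤ F (t + h₂) := by
    intro s hs
    rcases le_or_gt s (t + h₂) with h' | h'
    · have hsplit : F s + ∫ u in s..(t + h₂), ψ u = F (t + h₂) :=
        intervalIntegral.integral_add_adjacent_intervals (hψint _ _) (hψint _ _)
      have h0 : 0 ≤ ∫ u in s..(t + h₂), ψ u :=
        intervalIntegral.integral_nonneg h' (fun u _ => hψnn u)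
      linarith
    · rw [hconst_right s h'.le hs.2]
  have hF2 : F (t + h₂) = D * (h₁ + h₂) -
      ((∫ u in (0:ℝ)..h₁, ω u) + ∫ u in (0:ℝ)..h₂, ω u) := by
    show (∫ u in (t - h₁)..(t + h₂), ψ u) = _
    rw [intervalIntegral.integral_congr (g := fun s => D - ω |t - s|)
      (fun s hs => noclip s (by rwa [Set.uIcc_of_le (by linarith : t - h₁ ≤ t + h₂)] at hs))]
    rw [intervalIntegral.integral_sub intervalIntegrable_const (hφc.intervalIntegrable _ _),
      intervalIntegral.integral_const, integral_omega_abs hω t h₁ h₂ h1 h2]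
    simp only [smul_eq_mul]
    ring
  set M := F (t + h₂) / 2 with hM
  set f₀ : ℝ → E := fun s => (F s - M) • e with hf₀
  set f₀' : ℝ → E := fun s => ψ s • e with hf₀'
  have hder : ∀ s ∈ Set.Icc a b, HasDerivWithinAt f₀ (f₀' s) (Set.Icc a b) s := fun s _ =>
    (((hF s).sub_const M).smul_const e).hasDerivWithinAt
  have hhol : HHolder ω a b f₀' := by
    intro s _ u _
    show ‖ψ u • e - ψ s • e‖ ≤ ω |u - s|
    rw [← sub_smul, norm_smul, he, mul_one, Real.norm_eq_abs]
    have k1 : |ψ u - ψ s| ≤ |ω (|t - s|) - ω (|t - u|)| := by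
      rw [hψdef]
      have := abs_max_sub_max_le_abs (D - ω |t - u|) (D - ω |t - s|) 0
      rw [max_comm (D - ω |t - u|) 0, max_comm (D - ω |t - s|) 0,
        show D - ω |t - u| - (D - ω |t - s|) = ω (|t - s|) - ω (|t - u|) by ring] at this
      exact this
    refine k1.trans ?_
    have := modulus_phi_holder hω t s u
    rwa [abs_sub_comm s u] at this
  have hsup : ∀ u ∈ Set.Icc a b, ‖f₀ u‖ ≤ M := by
    intro u hu
    show ‖(F u - M) • e‖ ≤ M
    rw [norm_smul, he, mul_one, Real.norm_eq_abs]
    have l1 := hF0 u hu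
    have l2 := hFle u hu
    rw [abs_le]
    constructor <;> [linarith [hM]; linarith [hM]]
  have hFc : Continuous F := continuous_iff_continuousAt.2 (fun s => (hF s).continuousAt)
  have hcont₀ : ContinuousOn f₀ (Set.Icc a b) :=
    (((hFc.sub continuous_const).smul continuous_const)).continuousOn
  have hW₀ : W1HHolder ω a b f₀ f₀' := ⟨hder, hhol⟩
  have hW₁ : W1HHolder ω a b (fun s => -f₀ s) (fun s => -f₀' s) := by
    constructor
    · exact fun s hs => (hder s hs).neg
    · intro s hs u hu
      show ‖-f₀' u - -f₀' s‖ ≤ ω |u - s|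
      rw [neg_sub_neg, norm_sub_rev]
      exact hhol s hs u hu
  have hb₀ := hc f₀ f₀' hW₀
  have hb₁ := hc _ _ hW₁
  have hT₀ := hT f₀ hcont₀ M hsup
  have hT₁ := hT (fun s => -f₀ s) hcont₀.neg M (fun u hu => by
    rw [norm_neg]; exact hsup u hu)
  have hft : f₀' t = D • e := by show ψ t • e = D • e; rw [hψt]
  have h2D : 2 * D ≤ 2 * c + 2 * (2 / (h₁ + h₂) * M) := by
    have heq : (2 * D) • e = (f₀' t - T f₀) - (-f₀' t - T (fun s => -f₀ s)) +
        (T f₀ - T (fun s => -f₀ s)) := by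
      rw [hft, two_mul, add_smul]
      abel
    have hn : ‖(2 * D) • e‖ = 2 * D := by
      rw [norm_smul, he, mul_one, Real.norm_eq_abs, abs_of_nonneg (by linarith)]
    calc 2 * D = ‖(2 * D) • e‖ := hn.symm
      _ ≤ ‖(f₀' t - T f₀) - (-f₀' t - T (fun s => -f₀ s))‖ +
          ‖T f₀ - T (fun s => -f₀ s)‖ := by rw [heq]; exact norm_add_le _ _
      _ ≤ (‖f₀' t - T f₀‖ + ‖-f₀' t - T (fun s => -f₀ s)‖) +
          (‖T f₀‖ + ‖T (fun s => -f₀ s)‖) :=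
        add_le_add (norm_sub_le _ _) (norm_sub_le _ _)
      _ ≤ (c + c) + (2 / (h₁ + h₂) * M + 2 / (h₁ + h₂) * M) :=
        add_le_add (add_le_add hb₀ hb₁) (add_le_add hT₀ hT₁)
      _ = 2 * c + 2 * (2 / (h₁ + h₂) * M) := by ring
  have hMS : 2 / (h₁ + h₂) * M = D -
      ((∫ u in (0:ℝ)..h₁, ω u) + ∫ u in (0:ℝ)..h₂, ω u) / (h₁ + h₂) := by
    rw [hM, hF2]
    field_simp
  rw [hMS] at h2D
  linarith

/-- Stechkin-type theorem: best approximation on `W¹H^ω([a,b],E)` of the operator `f ↦ f′(t)`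
by operators `T` on `C([a,b],E)` of norm at most `N = 2/(h₁+h₂)` equals
`(I(h₁) + I(h₂))/(h₁+h₂)` and is attained at the divided-difference operator
`T*(g) = (g(t+h₂) − g(t−h₁))/(h₁+h₂)`, where `h₁ = min{h, t−a}`, `h₂ = min{h, b−t}` and
`I(α) = ∫_0^α ω(u) du`. -/
theorem stechkin_approximation_of_differentiation
    {E : Type*} [NormedAddCommGroup E] [NormedSpace ℝ E] [CompleteSpace E] [Nontrivial E]
    (ω : ℝ → ℝ) (hω : IsModulus ω)
    (a b : ℝ) (hab : a < b) (t : ℝ) (ht : t ∈ Set.Icc a b) (h : ℝ) (hh : 0 < h)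
    (h₁ h₂ : ℝ) (hh₁ : h₁ = min h (t - a)) (hh₂ : h₂ = min h (b - t)) :
    -- (i) every operator bounded (on continuous functions) with norm at most `2/(h₁+h₂)`
    -- deviates from differentiation at `t` by at least `(I(h₁)+I(h₂))/(h₁+h₂)`:
    (∀ T : (ℝ → E) → E,
      (∀ g : ℝ → E, ContinuousOn g (Set.Icc a b) → ∀ C : ℝ,
        (∀ u ∈ Set.Icc a b, ‖g u‖ ≤ C) → ‖T g‖ ≤ (2 / (h₁ + h₂)) * C) →
      ∀ c : ℝ, (∀ f f' : ℝ → E, W1HHolder ω a b f f' → ‖f' t - T f‖ ≤ c) →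
        ((∫ u in (0:ℝ)..h₁, ω u) + ∫ u in (0:ℝ)..h₂, ω u) / (h₁ + h₂) ≤ c) ∧
    -- (ii) the divided-difference operator has norm at most `2/(h₁+h₂)` …
    (∀ g : ℝ → E, ContinuousOn g (Set.Icc a b) → ∀ C : ℝ,
      (∀ u ∈ Set.Icc a b, ‖g u‖ ≤ C) →
      ‖(h₁ + h₂)⁻¹ • (g (t + h₂) - g (t - h₁))‖ ≤ (2 / (h₁ + h₂)) * C) ∧
    -- … and attains the best approximation:
    ∀ f f' : ℝ → E, W1HHolder ω a b f f' →
      ‖f' t - (h₁ + h₂)⁻¹ • (f (t + h₂) - f (t - h₁))‖ ≤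
        ((∫ u in (0:ℝ)..h₁, ω u) + ∫ u in (0:ℝ)..h₂, ω u) / (h₁ + h₂) := by
  have h1 : 0 ≤ h₁ := by rw [hh₁]; exact le_min hh.le (by linarith [ht.1])
  have h2 : 0 ≤ h₂ := by rw [hh₂]; exact le_min hh.le (by linarith [ht.2])
  have hta : a ≤ t - h₁ := by
    have := min_le_right h (t - a); rw [hh₁]; linarith
  have htb : t + h₂ ≤ b := by
    have := min_le_right h (b - t); rw [hh₂]; linarith
  have hp : 0 < h₁ + h₂ := by
    rcases lt_or_ge a t with hat | hat
    · have : 0 < h₁ := by rw [hh₁]; exact lt_min hh (by linarith)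
      linarith
    · have : 0 < h₂ := by rw [hh₂]; exact lt_min hh (by linarith [ht.1])
      linarith
  have hL : a < t - h₁ → h₂ ≤ h₁ := by
    intro hlt
    have hne : h₁ = h := by
      rcases min_choice h (t - a) with hmin | hmin
      · rw [hh₁, hmin]
      · rw [hh₁, hmin] at hlt; linarith
    rw [hh₂, hne]
    exact min_le_left _ _
  have hR : t + h₂ < b → h₁ ≤ h₂ := by
    intro hlt
    have hne : h₂ = h := by
      rcases min_choice h (b - t) with hmin | hmin
      · rw [hh₂, hmin]
      · rw [hh₂, hmin] at hlt; linarith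
    rw [hh₁, hne]
    exact min_le_left _ _
  refine ⟨?_, ?_, ?_⟩
  · intro T hT c hc
    exact stechkin_lower hω h1 h2 hp hta htb hL hR T hT c hc
  · intro g hg C hC
    have hC0 : 0 ≤ C := le_trans (norm_nonneg _) (hC a ⟨le_rfl, hab.le⟩)
    have k1 := hC _ (⟨hta, by linarith⟩ : t - h₁ ∈ Set.Icc a b)
    have k2 := hC _ (⟨by linarith, htb⟩ : t + h₂ ∈ Set.Icc a b)
    rw [norm_smul, Real.norm_eq_abs, abs_of_pos (inv_pos.2 hp)]
    have hs : ‖g (t + h₂) - g (t - h₁)‖ ≤ 2 * C := (norm_sub_le _ _).trans (by linarith)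
    calc (h₁ + h₂)⁻¹ * ‖g (t + h₂) - g (t - h₁)‖ ≤ (h₁ + h₂)⁻¹ * (2 * C) :=
        mul_le_mul_of_nonneg_left hs (inv_nonneg.2 hp.le)
      _ = 2 / (h₁ + h₂) * C := by field_simp
  · intro f f' hW
    exact stechkin_upper hω h1 h2 hp hta htb f f' hW
end

section
/- Optimal recovery of the derivative at a point from inexactly given functions: Let ω be a modulus of continuity, E a nontrivial real Banach space, a < b, t ∈ [a,b], h > 0; set h₁ = min{h, t−a}, h₂ = min{h, b−t}, I(α) = ∫_0^α ω(u) du, and δ = ((h₁+h₂)/2)·max{ω(h₁), ω(h₂)} − (I(h₁)+I(h₂))/2. Then the infimum, over all maps T: C([a,b],E) → E, of sup{ ‖f′(t) − T(g)‖ : f ∈ W^1H^ω([a,b],E), g ∈ C([a,b],E), sup_{u∈[a,b]} ‖f(u) − g(u)‖ ≤ δ } equals max{ω(h₁), ω(h₂)}, and the infimum is attained at the divided-difference operator T*(g) = (g(t+h₂) − g(t−h₁))/(h₁+h₂). -/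
open MeasureTheory Set

lemma mod_nonneg {ω : ℝ → ℝ} (hω : IsModulus ω) {s : ℝ} (hs : 0 ≤ s) : 0 ≤ ω s := by
  have := hω.2.2.1 (le_refl (0:ℝ)) hs hs
  rw [hω.1] at this; exact this

lemma mod_abs_sub {ω : ℝ → ℝ} (hω : IsModulus ω) {p q : ℝ} (hp : 0 ≤ p) (hq : 0 ≤ q) :
    |ω p - ω q| ≤ ω |p - q| := by
  rcases le_total q p with hle | hle
  · rw [abs_of_nonneg (sub_nonneg.2 (hω.2.2.1 hq hp hle)), abs_of_nonneg (sub_nonneg.2 hle)]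
    have h2 := hω.2.2.2 q (p - q) hq (sub_nonneg.2 hle)
    rw [add_sub_cancel] at h2; linarith
  · rw [abs_of_nonpos (sub_nonpos.2 (hω.2.2.1 hp hq hle)), abs_of_nonpos (sub_nonpos.2 hle),
      neg_sub, neg_sub]
    have h2 := hω.2.2.2 p (q - p) hp (sub_nonneg.2 hle)
    rw [add_sub_cancel] at h2; linarith

lemma mod_cont {ω : ℝ → ℝ} (hω : IsModulus ω) (t : ℝ) :
    Continuous (fun u : ℝ => ω |u - t|) := by
  have h1 : Continuous fun u : ℝ => |u - t| := (continuous_id.sub continuous_const).abs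
  rw [← continuousOn_univ]
  exact hω.2.1.comp h1.continuousOn (fun x _ => Set.mem_Ici.mpr (abs_nonneg _))

lemma mod_integral_abs {ω : ℝ → ℝ} (hω : IsModulus ω) (t h₁ h₂ : ℝ)
    (h1 : 0 ≤ h₁) (h2 : 0 ≤ h₂) :
    ∫ u in (t - h₁)..(t + h₂), ω |u - t| =
      (∫ u in (0:ℝ)..h₁, ω u) + ∫ u in (0:ℝ)..h₂, ω u := by
  have hc := mod_cont hω t
  have hsplit : (∫ u in (t - h₁)..t, ω |u - t|) + ∫ u in t..(t + h₂), ω |u - t| =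
      ∫ u in (t - h₁)..(t + h₂), ω |u - t| :=
    intervalIntegral.integral_add_adjacent_intervals (hc.intervalIntegrable _ _)
      (hc.intervalIntegrable _ _)
  have hL : (∫ u in (t - h₁)..t, ω |u - t|) = ∫ u in (0:ℝ)..h₁, ω u := by
    have : (∫ u in (t - h₁)..t, ω |u - t|) = ∫ u in (t - h₁)..t, ω (t - u) := by
      apply intervalIntegral.integral_congr
      intro u hu
      rw [uIcc_of_le (by linarith : t - h₁ ≤ t)] at hu
      obtain ⟨hu1, hu2⟩ := hu
      show ω |u - t| = ω (t - u)
      rw [abs_of_nonpos (by linarith), neg_sub]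
    rw [this, intervalIntegral.integral_comp_sub_left (fun v => ω v) t]
    norm_num
  have hR : (∫ u in t..(t + h₂), ω |u - t|) = ∫ u in (0:ℝ)..h₂, ω u := by
    have : (∫ u in t..(t + h₂), ω |u - t|) = ∫ u in t..(t + h₂), ω (u - t) := by
      apply intervalIntegral.integral_congr
      intro u hu
      rw [uIcc_of_le (by linarith : t ≤ t + h₂)] at hu
      obtain ⟨hu1, hu2⟩ := hu
      show ω |u - t| = ω (u - t)
      rw [abs_of_nonneg (by linarith)]
    rw [this, intervalIntegral.integral_comp_sub_right (fun v => ω v) t]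
    norm_num
  rw [← hsplit, hL, hR]

lemma holder_continuousOn_s19 {E : Type*} [NormedAddCommGroup E] {ω : ℝ → ℝ} (hω : IsModulus ω)
    {a b : ℝ} {f' : ℝ → E} (hf' : HHolder ω a b f') : ContinuousOn f' (Set.Icc a b) := by
  intro s hs
  have hkey : ∀ u ∈ Set.Icc a b, ‖f' u - f' s‖ ≤ ω |u - s| := hf' s hs
  have htend : Filter.Tendsto (fun u => ω |u - s|) (nhdsWithin s (Set.Icc a b)) (nhds 0) := by
    have h0 : Filter.Tendsto (fun u => ω |u - s|) (nhds s) (nhds (ω |s - s|)) :=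
      (mod_cont hω s).tendsto s
    simp only [sub_self, abs_zero, hω.1] at h0
    exact h0.mono_left nhdsWithin_le_nhds
  have : Filter.Tendsto (fun u => f' u - f' s) (nhdsWithin s (Set.Icc a b)) (nhds 0) := by
    apply squeeze_zero_norm' _ htend
    filter_upwards [self_mem_nhdsWithin] with u hu using hkey u hu
  have := this.add_const (f' s)
  exact (by simpa using this : Filter.Tendsto f' (nhdsWithin s (Set.Icc a b)) (nhds (f' s)))

/-- Optimal recovery of the derivative at a point from inexactly given functions: with
`h₁ = min{h, t−a}`, `h₂ = min{h, b−t}`, `I(α) = ∫_0^α ω(u) du` and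
`δ = ((h₁+h₂)/2)·max{ω(h₁), ω(h₂)} − (I(h₁)+I(h₂))/2`, the optimal error of recovery of
`f ↦ f′(t)` on `W¹H^ω([a,b],E)` from functions known with error `δ` in the uniform metric equals
`max{ω(h₁), ω(h₂)}`, and is attained at the divided-difference operator
`T*(g) = (g(t+h₂) − g(t−h₁))/(h₁+h₂)`. -/
theorem optimal_recovery_derivative_inexact_data
    {E : Type*} [NormedAddCommGroup E] [NormedSpace ℝ E] [CompleteSpace E] [Nontrivial E]
    (ω : ℝ → ℝ) (hω : IsModulus ω)
    (a b : ℝ) (hab : a < b) (t : ℝ) (ht : t ∈ Set.Icc a b) (h : ℝ) (hh : 0 < h)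
    (h₁ h₂ : ℝ) (hh₁ : h₁ = min h (t - a)) (hh₂ : h₂ = min h (b - t))
    (δ : ℝ)
    (hδ : δ = ((h₁ + h₂) / 2) * max (ω h₁) (ω h₂) -
        ((∫ u in (0:ℝ)..h₁, ω u) + ∫ u in (0:ℝ)..h₂, ω u) / 2) :
    -- the divided-difference operator recovers the derivative with error `max{ω h₁, ω h₂}` …
    (∀ f f' g : ℝ → E, W1HHolder ω a b f f' → ContinuousOn g (Set.Icc a b) →
      (∀ u ∈ Set.Icc a b, ‖f u - g u‖ ≤ δ) →
      ‖f' t - (h₁ + h₂)⁻¹ • (g (t + h₂) - g (t - h₁))‖ ≤ max (ω h₁) (ω h₂)) ∧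
    -- … and no operator can do better:
    ∀ T : (ℝ → E) → E, ∀ c : ℝ,
      (∀ f f' g : ℝ → E, W1HHolder ω a b f f' → ContinuousOn g (Set.Icc a b) →
        (∀ u ∈ Set.Icc a b, ‖f u - g u‖ ≤ δ) → ‖f' t - T g‖ ≤ c) →
      max (ω h₁) (ω h₂) ≤ c := by
  obtain ⟨hat, htb'⟩ := ht
  have h1nn : 0 ≤ h₁ := by rw [hh₁]; exact le_min hh.le (by linarith)
  have h2nn : 0 ≤ h₂ := by rw [hh₂]; exact le_min hh.le (by linarith)
  have hta : a ≤ t - h₁ := by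
    have := min_le_right h (t - a); rw [hh₁]; linarith [min_le_right h (t - a)]
  have htb : t + h₂ ≤ b := by
    have := min_le_right h (b - t); rw [hh₂]; linarith [min_le_right h (b - t)]
  have hsum : 0 < h₁ + h₂ := by
    rcases lt_or_ge a t with hlt | hle
    · have : 0 < h₁ := by rw [hh₁]; exact lt_min hh (by linarith)
      linarith
    · have hae : t = a := le_antisymm hle hat
      have : 0 < h₂ := by rw [hh₂]; exact lt_min hh (by rw [hae]; linarith)
      linarith
  set M := max (ω h₁) (ω h₂) with hM
  have hωh₁ : 0 ≤ ω h₁ := mod_nonneg hω h1nn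
  have Mnn : 0 ≤ M := le_trans hωh₁ (le_max_left _ _)
  have ωbound : ∀ u ∈ Set.Icc (t - h₁) (t + h₂), ω |u - t| ≤ M := by
    intro u hu
    rcases le_total u t with hle | hle
    · have habs : |u - t| = t - u := by rw [abs_of_nonpos (by linarith), neg_sub]
      rw [habs]
      refine le_trans (hω.2.2.1 (by simp; linarith) (Set.mem_Ici.mpr h1nn)
        (by linarith [hu.1])) (le_max_left _ _)
    · have habs : |u - t| = u - t := abs_of_nonneg (by linarith)
      rw [habs]
      refine le_trans (hω.2.2.1 (by simp; linarith) (Set.mem_Ici.mpr h2nn)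
        (by linarith [hu.2])) (le_max_right _ _)
  have hmem1 : t - h₁ ∈ Set.Icc a b := ⟨hta, by linarith⟩
  have hmem2 : t + h₂ ∈ Set.Icc a b := ⟨by linarith, htb⟩
  have hIab : ∫ u in (t - h₁)..(t + h₂), ω |u - t| =
      (∫ u in (0:ℝ)..h₁, ω u) + ∫ u in (0:ℝ)..h₂, ω u := mod_integral_abs hω t h₁ h₂ h1nn h2nn
  constructor
  · -- upper bound for the divided-difference operator
    intro f f' g hf hg hfg
    obtain ⟨hdiff, hhol⟩ := hf
    have hf'cont : ContinuousOn f' (Set.Icc a b) := holder_continuousOn_s19 hω hhol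
    have hfcont : ContinuousOn f (Set.Icc a b) := fun x hx =>
      (hdiff x hx).continuousWithinAt
    have hint : IntervalIntegrable f' volume (t - h₁) (t + h₂) :=
      (hf'cont.mono (Set.Icc_subset_Icc hta htb)).intervalIntegrable_of_Icc (by linarith)
    have hFTC : ∫ u in (t - h₁)..(t + h₂), f' u = f (t + h₂) - f (t - h₁) := by
      apply intervalIntegral.integral_eq_sub_of_hasDeriv_right_of_le (by linarith)
        (hfcont.mono (Set.Icc_subset_Icc hta htb)) _ hint
      intro x hx
      have hx' : x ∈ Set.Icc a b := ⟨by linarith [hx.1], by linarith [hx.2]⟩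
      have hd : HasDerivAt f (f' x) x :=
        (hdiff x hx').hasDerivAt (Icc_mem_nhds (by linarith [hx.1]) (by linarith [hx.2]))
      exact hd.hasDerivWithinAt
    have hsub : ∫ u in (t - h₁)..(t + h₂), (f' u - f' t) =
        (f (t + h₂) - f (t - h₁)) - (h₁ + h₂) • f' t := by
      rw [intervalIntegral.integral_sub hint intervalIntegrable_const, hFTC,
        intervalIntegral.integral_const]
      congr 2
      ring
    have hnorm : ‖∫ u in (t - h₁)..(t + h₂), (f' u - f' t)‖ ≤
        (∫ u in (0:ℝ)..h₁, ω u) + ∫ u in (0:ℝ)..h₂, ω u := by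
      have hb : IntervalIntegrable (fun u => ω |u - t|) volume (t - h₁) (t + h₂) :=
        (mod_cont hω t).intervalIntegrable _ _
      have := intervalIntegral.norm_integral_le_abs_of_norm_le
        (f := fun u => f' u - f' t) (μ := volume) (g := fun u => ω |u - t|) ?_ hb
      · refine le_trans this ?_
        rw [hIab] at this ⊢
        rw [abs_of_nonneg]
        have i1 : 0 ≤ ∫ u in (0:ℝ)..h₁, ω u :=
          intervalIntegral.integral_nonneg h1nn (fun u hu => mod_nonneg hω hu.1)
        have i2 : 0 ≤ ∫ u in (0:ℝ)..h₂, ω u :=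
          intervalIntegral.integral_nonneg h2nn (fun u hu => mod_nonneg hω hu.1)
        rw [← hIab]; rw [hIab]; linarith
      · apply ae_restrict_of_forall_mem measurableSet_uIoc
        intro u hu
        rw [Set.uIoc_of_le (by linarith : t - h₁ ≤ t + h₂)] at hu
        have hu' : u ∈ Set.Icc a b := ⟨by linarith [hu.1], by linarith [hu.2]⟩
        exact hhol t ⟨hat, htb'⟩ u hu'
    have key : ‖(h₁ + h₂) • f' t - (g (t + h₂) - g (t - h₁))‖ ≤ (h₁ + h₂) * M := by
      have decomp : (h₁ + h₂) • f' t - (g (t + h₂) - g (t - h₁)) =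
          -(∫ u in (t - h₁)..(t + h₂), (f' u - f' t)) +
            ((f (t + h₂) - g (t + h₂)) - (f (t - h₁) - g (t - h₁))) := by
        rw [hsub]; abel
      rw [decomp]
      have b1 := hfg (t + h₂) hmem2
      have b2 := hfg (t - h₁) hmem1
      calc ‖-(∫ u in (t - h₁)..(t + h₂), (f' u - f' t)) +
            ((f (t + h₂) - g (t + h₂)) - (f (t - h₁) - g (t - h₁)))‖
          ≤ ‖∫ u in (t - h₁)..(t + h₂), (f' u - f' t)‖ +
            (‖f (t + h₂) - g (t + h₂)‖ + ‖f (t - h₁) - g (t - h₁)‖) := by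
            refine le_trans (norm_add_le _ _) ?_
            rw [norm_neg]
            exact add_le_add le_rfl (norm_sub_le _ _)
        _ ≤ ((∫ u in (0:ℝ)..h₁, ω u) + ∫ u in (0:ℝ)..h₂, ω u) + (δ + δ) := by
            exact add_le_add hnorm (add_le_add b1 b2)
        _ = (h₁ + h₂) * M := by rw [hδ]; ring
    have hrw : f' t - (h₁ + h₂)⁻¹ • (g (t + h₂) - g (t - h₁)) =
        (h₁ + h₂)⁻¹ • ((h₁ + h₂) • f' t - (g (t + h₂) - g (t - h₁))) := by
      match_scalars <;> field_simp
    rw [hrw, norm_smul, Real.norm_eq_abs, abs_of_pos (inv_pos.2 hsum)]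
    calc (h₁ + h₂)⁻¹ * ‖(h₁ + h₂) • f' t - (g (t + h₂) - g (t - h₁))‖
        ≤ (h₁ + h₂)⁻¹ * ((h₁ + h₂) * M) :=
          mul_le_mul_of_nonneg_left key (by positivity)
      _ = M := by field_simp
  · -- lower bound: no operator can do better
    intro T c hT
    obtain ⟨x0, hx0⟩ := exists_ne (0 : E)
    set e : E := ‖x0‖⁻¹ • x0 with he_def
    have he : ‖e‖ = 1 := by
      rw [he_def, norm_smul, norm_inv, norm_norm, inv_mul_cancel₀ (norm_ne_zero_iff.2 hx0)]
    set φ : ℝ → ℝ := fun u => max (M - ω |u - t|) 0 with hφ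
    have φcont : Continuous φ := (continuous_const.sub (mod_cont hω t)).max continuous_const
    have φnn : ∀ u, 0 ≤ φ u := fun u => le_max_right _ _
    have φt : φ t = M := by
      show max (M - ω |t - t|) 0 = M
      rw [sub_self, abs_zero, hω.1, sub_zero]
      exact max_eq_left Mnn
    have φholder : ∀ s u : ℝ, |φ u - φ s| ≤ ω |u - s| := by
      intro s u
      refine le_trans (abs_max_sub_max_le_abs _ _ _) ?_
      rw [show M - ω |u - t| - (M - ω |s - t|) = -(ω |u - t| - ω |s - t|) by ring, abs_neg]
      refine le_trans (mod_abs_sub hω (abs_nonneg _) (abs_nonneg _)) ?_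
      refine hω.2.2.1 (Set.mem_Ici.mpr (abs_nonneg _)) (Set.mem_Ici.mpr (abs_nonneg _)) ?_
      calc |(|u - t| - |s - t|)| ≤ |(u - t) - (s - t)| := abs_abs_sub_abs_le_abs_sub _ _
        _ = |u - s| := by rw [show (u - t) - (s - t) = u - s by ring]
    set ψ : ℝ → ℝ := fun x => (∫ u in (t - h₁)..x, φ u) - δ with hψ
    have ψderiv : ∀ x : ℝ, HasDerivAt ψ (φ x) x := by
      intro x
      exact (intervalIntegral.integral_hasDerivAt_right
        (φcont.intervalIntegrable _ _)
        (φcont.stronglyMeasurableAtFilter _ _)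
        φcont.continuousAt).sub_const δ
    have hI2δ : ∫ u in (t - h₁)..(t + h₂), φ u = 2 * δ := by
      have hcongr : ∫ u in (t - h₁)..(t + h₂), φ u
          = ∫ u in (t - h₁)..(t + h₂), (M - ω |u - t|) := by
        apply intervalIntegral.integral_congr
        intro u hu
        rw [uIcc_of_le (by linarith)] at hu
        exact max_eq_left (by linarith [ωbound u hu])
      rw [hcongr, intervalIntegral.integral_sub intervalIntegrable_const
        ((mod_cont hω t).intervalIntegrable _ _), hIab,
        intervalIntegral.integral_const, smul_eq_mul, hδ]
      ring
    have δnn : 0 ≤ δ := by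
      have hge : (0:ℝ) ≤ ∫ u in (t - h₁)..(t + h₂), φ u :=
        intervalIntegral.integral_nonneg (by linarith : t - h₁ ≤ t + h₂) (fun u _ => φnn u)
      rw [hI2δ] at hge
      linarith
    have hIa : ∫ u in a..(t - h₁), φ u = 0 := by
      rcases min_cases h (t - a) with ⟨he1, hle⟩ | ⟨he1, hle⟩
      · have hh1 : h₁ = h := by rw [hh₁, he1]
        have h2h : ω h₂ ≤ ω h := hω.2.2.1 (Set.mem_Ici.mpr h2nn) (Set.mem_Ici.mpr hh.le)
          (by rw [hh₂]; exact min_le_left _ _)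
        have hMh : M ≤ ω h := by
          rw [hM, hh1]
          exact max_le le_rfl h2h
        have hzero : Set.EqOn φ (fun _ => (0:ℝ)) (Set.uIcc a (t - h₁)) := by
          intro u hu
          rw [uIcc_of_le (by linarith)] at hu
          have h1 : h ≤ t - u := by
            have h2u := hu.2
            rw [hh1] at h2u
            linarith
          have h2 : ω h ≤ ω |u - t| := by
            rw [abs_of_nonpos (by linarith), neg_sub]
            exact hω.2.2.1 (Set.mem_Ici.mpr hh.le) (Set.mem_Ici.mpr (by linarith)) h1
          show max (M - ω |u - t|) 0 = 0
          exact max_eq_right (by linarith)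
        rw [intervalIntegral.integral_congr hzero, intervalIntegral.integral_zero]
      · have : t - h₁ = a := by rw [hh₁, he1]; ring
        rw [this, intervalIntegral.integral_same]
    have hIb : ∫ u in (t + h₂)..b, φ u = 0 := by
      rcases min_cases h (b - t) with ⟨he1, hle⟩ | ⟨he1, hle⟩
      · have hh2 : h₂ = h := by rw [hh₂, he1]
        have h1h : ω h₁ ≤ ω h := hω.2.2.1 (Set.mem_Ici.mpr h1nn) (Set.mem_Ici.mpr hh.le)
          (by rw [hh₁]; exact min_le_left _ _)
        have hMh : M ≤ ω h := by
          rw [hM, hh2]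
          exact max_le h1h le_rfl
        have hzero : Set.EqOn φ (fun _ => (0:ℝ)) (Set.uIcc (t + h₂) b) := by
          intro u hu
          rw [uIcc_of_le (by linarith)] at hu
          have h1 : h ≤ u - t := by
            have := hu.1
            rw [hh2] at this
            linarith
          have h2 : ω h ≤ ω |u - t| := by
            rw [abs_of_nonneg (by linarith)]
            exact hω.2.2.1 (Set.mem_Ici.mpr hh.le) (Set.mem_Ici.mpr (by linarith)) h1
          show max (M - ω |u - t|) 0 = 0
          exact max_eq_right (by linarith)
        rw [intervalIntegral.integral_congr hzero, intervalIntegral.integral_zero]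
      · have : t + h₂ = b := by rw [hh₂, he1]; ring
        rw [this, intervalIntegral.integral_same]
    have ψa : ψ a = -δ := by
      show (∫ u in (t - h₁)..a, φ u) - δ = -δ
      rw [intervalIntegral.integral_symm, hIa]
      ring
    have ψb : ψ b = δ := by
      show (∫ u in (t - h₁)..b, φ u) - δ = δ
      have hadj := intervalIntegral.integral_add_adjacent_intervals
        (φcont.intervalIntegrable (μ := volume) (t - h₁) (t + h₂))
        (φcont.intervalIntegrable (μ := volume) (t + h₂) b)
      rw [hI2δ, hIb] at hadj
      linarith
    have ψmono : ∀ x y : ℝ, x ≤ y → ψ x ≤ ψ y := by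
      intro x y hxy
      have hadj := intervalIntegral.integral_add_adjacent_intervals
        (φcont.intervalIntegrable (μ := volume) (t - h₁) x)
        (φcont.intervalIntegrable (μ := volume) x y)
      have hnn : (0:ℝ) ≤ ∫ u in x..y, φ u :=
        intervalIntegral.integral_nonneg hxy (fun u _ => φnn u)
      show (∫ u in (t - h₁)..x, φ u) - δ ≤ (∫ u in (t - h₁)..y, φ u) - δ
      linarith
    have ψbdd : ∀ u ∈ Set.Icc a b, |ψ u| ≤ δ := by
      intro u hu
      rw [abs_le]
      constructor
      · rw [← ψa]; exact ψmono a u hu.1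
      · rw [← ψb]; exact ψmono u b hu.2
    set f₀ : ℝ → E := fun x => ψ x • e with hf₀
    set f₀' : ℝ → E := fun x => φ x • e with hf₀'
    have hW : W1HHolder ω a b f₀ f₀' := by
      constructor
      · intro u hu
        exact ((ψderiv u).smul_const e).hasDerivWithinAt
      · intro s hs u hu
        show ‖φ u • e - φ s • e‖ ≤ ω |u - s|
        rw [← sub_smul, norm_smul, he, mul_one, Real.norm_eq_abs]
        exact φholder s u
    have hWn : W1HHolder ω a b (fun x => -f₀ x) (fun x => -f₀' x) := by
      constructor
      · intro u hu
        exact (hW.1 u hu).neg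
      · intro s hs u hu
        have hkey := hW.2 u hu s hs
        rw [abs_sub_comm] at hkey
        calc ‖-f₀' u - -f₀' s‖ = ‖f₀' s - f₀' u‖ := by rw [neg_sub_neg]
          _ ≤ ω |u - s| := hkey
    have hg0 : ContinuousOn (fun _ : ℝ => (0 : E)) (Set.Icc a b) := continuousOn_const
    have hb1 : ∀ u ∈ Set.Icc a b, ‖f₀ u - (fun _ : ℝ => (0:E)) u‖ ≤ δ := by
      intro u hu
      show ‖ψ u • e - 0‖ ≤ δ
      rw [sub_zero, norm_smul, he, mul_one, Real.norm_eq_abs]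
      exact ψbdd u hu
    have hb2 : ∀ u ∈ Set.Icc a b, ‖(fun x => -f₀ x) u - (fun _ : ℝ => (0:E)) u‖ ≤ δ := by
      intro u hu
      show ‖-(ψ u • e) - 0‖ ≤ δ
      rw [sub_zero, norm_neg, norm_smul, he, mul_one, Real.norm_eq_abs]
      exact ψbdd u hu
    have hT1 := hT f₀ f₀' (fun _ => 0) hW hg0 hb1
    have hT2 := hT (fun x => -f₀ x) (fun x => -f₀' x) (fun _ => 0) hWn hg0 hb2
    have hnormt : ‖f₀' t‖ = M := by
      show ‖φ t • e‖ = M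
      rw [norm_smul, he, mul_one, φt, Real.norm_eq_abs, abs_of_nonneg Mnn]
    have hdiff2 : (f₀' t - T (fun _ => 0)) - ((fun x => -f₀' x) t - T (fun _ => 0))
        = (2:ℝ) • f₀' t := by
      show (f₀' t - T (fun _ => 0)) - (-f₀' t - T (fun _ => 0)) = (2:ℝ) • f₀' t
      module
    have h2M : 2 * M ≤ 2 * c := by
      have heq : (2:ℝ) * M = ‖(f₀' t - T (fun _ => 0)) - ((fun x => -f₀' x) t - T (fun _ => 0))‖ := by
        rw [hdiff2, norm_smul, hnormt, Real.norm_eq_abs]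
        norm_num
      rw [heq]
      calc ‖(f₀' t - T (fun _ => 0)) - ((fun x => -f₀' x) t - T (fun _ => 0))‖
          ≤ ‖f₀' t - T (fun _ => 0)‖ + ‖(fun x => -f₀' x) t - T (fun _ => 0)‖ := norm_sub_le _ _
        _ ≤ c + c := add_le_add hT1 hT2
        _ = 2 * c := by ring
    linarith
end
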